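/- arXiv:1002.1142 — 7 statements merged into one kernel-verified Lean document; each statement's English description precedes it below -/
import Mathlib

section
/- Let n ≥ 2, let (A_i, 𝒜_i, μ_i), 1 ≤ i ≤ n, be σ-finite measure spaces, and for each i let M_i be a set of probability densities with respect to μ_i. Let δ_1,…,δ_n > 0, and suppose each M_i is covered by a finite family of N_i brackets, each of Hellinger diameter (with respect to μ_i) at most δ_i. Then the product model M = { s(x_1,…,x_n) = ∏_{i=1}^n s_i(x_i) : s_i ∈ M_i }, consisting of probability densities on ∏_{i=1}^n A_i with respect to the product measure ⊗_{i=1}^n μ_i, is covered by a finite family of at most ∏_{i=1}^n N_i brackets, each of Hellinger diameter at most ∏_{i=1}^n (1+δ_i) − 1. -/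
open MeasureTheory Real BigOperators

noncomputable section

set_option maxHeartbeats 1000000

/-- Hellinger distance between two nonnegative functions with respect to a
measure `μ`. -/
def hellM {α : Type*} [MeasurableSpace α] (μ : Measure α) (s t : α → ℝ) : ℝ :=
  Real.sqrt (∫ a, (Real.sqrt (s a) - Real.sqrt (t a)) ^ 2 ∂μ)

/-- `M` is covered by `N` brackets, each of Hellinger diameter at most `ε`. -/
def IsBracketCover {α : Type*} [MeasurableSpace α] (μ : Measure α)
    (M : Set (α → ℝ)) (N : ℕ) (ε : ℝ) : Prop :=
  ∃ lo up : Fin N → α → ℝ,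
    (∀ i, Measurable (lo i) ∧ Measurable (up i) ∧
      Integrable (lo i) μ ∧ Integrable (up i) μ ∧ hellM μ (lo i) (up i) ≤ ε) ∧
    ∀ s ∈ M, ∃ i, ∀ a, lo i a ≤ s a ∧ s a ≤ up i a

private lemma sq_le_of_sq_le {x y : ℝ} (hx : 0 ≤ x) (hy : 0 ≤ y) (h : x ^ 2 ≤ y ^ 2) : x ≤ y := by
  nlinarith

private lemma scalar_key {ι : Type*} (S : Finset ι) (A B C d : ι → ℝ)
    (h : ∀ i ∈ S, 0 ≤ A i ∧ A i ≤ 1 ∧ A i ≤ C i ∧ C i ≤ B i ∧ C i ^ 2 ≤ A i * B i ∧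
      0 ≤ d i ∧ A i + B i - 2 * C i ≤ d i ^ 2) :
    0 ≤ ∏ i ∈ S, A i ∧ (∏ i ∈ S, A i) ≤ 1 ∧ (∏ i ∈ S, A i) ≤ ∏ i ∈ S, C i ∧
      (∏ i ∈ S, C i) ≤ ∏ i ∈ S, B i ∧
      (∏ i ∈ S, C i) ^ 2 ≤ (∏ i ∈ S, A i) * ∏ i ∈ S, B i ∧
      (∏ i ∈ S, B i) ≤ (∏ i ∈ S, (1 + d i)) ^ 2 ∧ 1 ≤ ∏ i ∈ S, (1 + d i) ∧
      (∏ i ∈ S, A i) + (∏ i ∈ S, B i) - 2 * ∏ i ∈ S, C i ≤ (∏ i ∈ S, (1 + d i) - 1) ^ 2 := by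
  classical
  induction S using Finset.cons_induction with
  | empty => norm_num
  | cons a S ha ih =>
    obtain ⟨hA0, hA1, hAC, hCB, hCS, hd0, hd⟩ := h a (Finset.mem_cons_self a S)
    obtain ⟨PA0, PA1, PAC, PCB, PCS, PBQ, Q1, Pd⟩ := ih (fun i hi => h i (Finset.mem_cons_of_mem hi))
    set PA := ∏ i ∈ S, A i
    set PB := ∏ i ∈ S, B i
    set PC := ∏ i ∈ S, C i
    set Q := ∏ i ∈ S, (1 + d i)
    simp only [Finset.prod_cons]
    have hC0 : 0 ≤ C a := hA0.trans hAC
    have hB0 : 0 ≤ B a := hC0.trans hCB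
    have PC0 : 0 ≤ PC := PA0.trans PAC
    have PB0 : 0 ≤ PB := PC0.trans PCB
    -- nonneg of "defects"
    have hd2 : 0 ≤ A a + B a - 2 * C a := by nlinarith [sq_nonneg (A a - B a)]
    have Pd2 : 0 ≤ PA + PB - 2 * PC := by nlinarith [sq_nonneg (PA - PB)]
    have hQ0 : 0 ≤ Q := le_trans zero_le_one Q1
    -- B a ≤ (1 + d a)^2
    have hCd : C a - A a ≤ d a := by
      apply sq_le_of_sq_le (by linarith) hd0
      calc (C a - A a) ^ 2 ≤ A a * (A a + B a - 2 * C a) := by nlinarith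
        _ ≤ d a ^ 2 := by nlinarith
    have hB1d : B a ≤ (1 + d a) ^ 2 := by nlinarith
    refine ⟨mul_nonneg hA0 PA0, ?_, ?_, ?_, ?_, ?_, ?_, ?_⟩
    · exact mul_le_one₀ hA1 PA0 PA1
    · exact mul_le_mul hAC PAC PA0 hC0
    · exact mul_le_mul hCB PCB PC0 hB0
    · calc (C a * PC) ^ 2 = C a ^ 2 * PC ^ 2 := by ring
        _ ≤ (A a * B a) * (PA * PB) := by
            apply mul_le_mul hCS PCS (sq_nonneg _) (mul_nonneg hA0 hB0)
        _ = A a * PA * (B a * PB) := by ring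
    · calc B a * PB ≤ (1 + d a) ^ 2 * Q ^ 2 := by
            apply mul_le_mul hB1d PBQ PB0 (sq_nonneg _)
        _ = ((1 + d a) * Q) ^ 2 := by ring
    · calc (1:ℝ) = 1 * 1 := by ring
        _ ≤ (1 + d a) * Q := mul_le_mul (by linarith) Q1 zero_le_one (by linarith)
    · -- main inequality
      have t1 : (A a + B a - 2 * C a) * PB ≤ d a ^ 2 * Q ^ 2 := by
        apply mul_le_mul hd PBQ PB0 (sq_nonneg _)
      have t2 : A a * (PA + PB - 2 * PC) ≤ 1 * (Q - 1) ^ 2 := by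
        apply mul_le_mul hA1 Pd Pd2 zero_le_one
      have t3 : (C a - A a) * (PB - PC) ≤ d a * (Q * (Q - 1)) := by
        apply sq_le_of_sq_le (mul_nonneg (by linarith) (by linarith))
          (mul_nonneg hd0 (mul_nonneg hQ0 (by linarith)))
        have e1 : (C a - A a) ^ 2 ≤ 1 * d a ^ 2 := by nlinarith
        have e2 : (PB - PC) ^ 2 ≤ PB * (PA + PB - 2 * PC) := by nlinarith
        have e3 : PB * (PA + PB - 2 * PC) ≤ Q ^ 2 * (Q - 1) ^ 2 := by
          apply mul_le_mul PBQ Pd Pd2 (sq_nonneg _)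
        calc ((C a - A a) * (PB - PC)) ^ 2 = (C a - A a) ^ 2 * (PB - PC) ^ 2 := by ring
          _ ≤ (1 * d a ^ 2) * (Q ^ 2 * (Q - 1) ^ 2) := by
              apply mul_le_mul e1 (e2.trans e3) (sq_nonneg _) (by nlinarith)
          _ = (d a * (Q * (Q - 1))) ^ 2 := by ring
      have key : A a * PA + B a * PB - 2 * (C a * PC) =
          (A a + B a - 2 * C a) * PB + A a * (PA + PB - 2 * PC) + 2 * ((C a - A a) * (PB - PC)) := by ring
      have rhs : ((1 + d a) * Q - 1) ^ 2 = d a ^ 2 * Q ^ 2 + (Q - 1) ^ 2 + 2 * (d a * (Q * (Q - 1))) := by ring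
      have goal' : A a * PA + B a * PB - 2 * (C a * PC) ≤ ((1 + d a) * Q - 1) ^ 2 := by
        rw [key, rhs]; linarith
      linarith [goal']

private lemma sqrt_finset_prod {ι : Type*} (S : Finset ι) (f : ι → ℝ) (hf : ∀ i ∈ S, 0 ≤ f i) :
    Real.sqrt (∏ i ∈ S, f i) = ∏ i ∈ S, Real.sqrt (f i) := by
  classical
  induction S using Finset.cons_induction with
  | empty => simp
  | cons a S ha ih =>
    rw [Finset.prod_cons, Finset.prod_cons, Real.sqrt_mul (hf a (Finset.mem_cons_self a S)),
      ih (fun i hi => hf i (Finset.mem_cons_of_mem hi))]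

private lemma integral_CS {α : Type*} [MeasurableSpace α] (μ : Measure α) (f g : α → ℝ)
    (hf : Measurable f) (hg : Measurable g) (hf0 : ∀ a, 0 ≤ f a) (hg0 : ∀ a, 0 ≤ g a)
    (hf2 : Integrable (fun a => f a ^ 2) μ) (hg2 : Integrable (fun a => g a ^ 2) μ) :
    (∫ a, f a * g a ∂μ) ^ 2 ≤ (∫ a, f a ^ 2 ∂μ) * ∫ a, g a ^ 2 ∂μ := by
  have hconj : Real.HolderConjugate 2 2 := Real.holderConjugate_iff.mpr ⟨one_lt_two, by norm_num⟩
  have hfm : MemLp f 2 μ := (memLp_two_iff_integrable_sq hf.aestronglyMeasurable).2 hf2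
  have hgm : MemLp g 2 μ := (memLp_two_iff_integrable_sq hg.aestronglyMeasurable).2 hg2
  have h := integral_mul_le_Lp_mul_Lq_of_nonneg hconj
    (Filter.Eventually.of_forall hf0) (Filter.Eventually.of_forall hg0)
    (by simpa using hfm) (by simpa using hgm)
  have hrw : ∀ (h : α → ℝ), (∫ a, h a ^ (2:ℝ) ∂μ) = ∫ a, h a ^ 2 ∂μ := by
    intro h
    congr 1
    ext a
    rw [← Real.rpow_natCast (h a) 2]
    norm_num
  rw [hrw f, hrw g] at h
  have hA : 0 ≤ ∫ a, f a ^ 2 ∂μ := integral_nonneg fun a => sq_nonneg _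
  have hB : 0 ≤ ∫ a, g a ^ 2 ∂μ := integral_nonneg fun a => sq_nonneg _
  have h0 : 0 ≤ ∫ a, f a * g a ∂μ := integral_nonneg fun a => mul_nonneg (hf0 a) (hg0 a)
  calc (∫ a, f a * g a ∂μ) ^ 2
      ≤ ((∫ a, f a ^ 2 ∂μ) ^ (1/(2:ℝ)) * (∫ a, g a ^ 2 ∂μ) ^ (1/(2:ℝ))) ^ 2 := by
        apply pow_le_pow_left₀ h0 h
    _ = (∫ a, f a ^ 2 ∂μ) * ∫ a, g a ^ 2 ∂μ := by
        rw [mul_pow, ← Real.rpow_natCast (_ ^ (1/(2:ℝ))) 2, ← Real.rpow_natCast (_ ^ (1/(2:ℝ))) 2,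
          ← Real.rpow_mul hA, ← Real.rpow_mul hB]
        norm_num

private lemma bracket_facts {α : Type*} [MeasurableSpace α] (μ : Measure α) (l u : α → ℝ)
    (hlm : Measurable l) (hum : Measurable u) (hli : Integrable l μ) (hui : Integrable u μ)
    (h0l : ∀ a, 0 ≤ l a) (hlu : ∀ a, l a ≤ u a) :
    Integrable (fun a => Real.sqrt (l a) * Real.sqrt (u a)) μ ∧
    (∫ a, (Real.sqrt (l a) - Real.sqrt (u a)) ^ 2 ∂μ)
      = (∫ a, l a ∂μ) + (∫ a, u a ∂μ) - 2 * ∫ a, Real.sqrt (l a) * Real.sqrt (u a) ∂μ ∧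
    0 ≤ ∫ a, l a ∂μ ∧
    (∫ a, l a ∂μ) ≤ ∫ a, Real.sqrt (l a) * Real.sqrt (u a) ∂μ ∧
    (∫ a, Real.sqrt (l a) * Real.sqrt (u a) ∂μ) ≤ ∫ a, u a ∂μ ∧
    (∫ a, Real.sqrt (l a) * Real.sqrt (u a) ∂μ) ^ 2 ≤ (∫ a, l a ∂μ) * ∫ a, u a ∂μ := by
  have h0u : ∀ a, 0 ≤ u a := fun a => (h0l a).trans (hlu a)
  have hsl : Measurable fun a => Real.sqrt (l a) := Real.continuous_sqrt.measurable.comp hlm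
  have hsu : Measurable fun a => Real.sqrt (u a) := Real.continuous_sqrt.measurable.comp hum
  have hub : ∀ a, Real.sqrt (l a) * Real.sqrt (u a) ≤ u a := fun a =>
    calc Real.sqrt (l a) * Real.sqrt (u a)
        ≤ Real.sqrt (u a) * Real.sqrt (u a) :=
          mul_le_mul_of_nonneg_right (Real.sqrt_le_sqrt (hlu a)) (Real.sqrt_nonneg _)
      _ = u a := Real.mul_self_sqrt (h0u a)
  have hCi : Integrable (fun a => Real.sqrt (l a) * Real.sqrt (u a)) μ := by
    refine hui.mono' (hsl.mul hsu).aestronglyMeasurable (Filter.Eventually.of_forall fun a => ?_)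
    rw [Real.norm_eq_abs, abs_of_nonneg (mul_nonneg (Real.sqrt_nonneg _) (Real.sqrt_nonneg _))]
    exact hub a
  have hlb : ∀ a, l a ≤ Real.sqrt (l a) * Real.sqrt (u a) := fun a =>
    calc l a = Real.sqrt (l a) * Real.sqrt (l a) := (Real.mul_self_sqrt (h0l a)).symm
      _ ≤ Real.sqrt (l a) * Real.sqrt (u a) :=
        mul_le_mul_of_nonneg_left (Real.sqrt_le_sqrt (hlu a)) (Real.sqrt_nonneg _)
  have el : (fun a => Real.sqrt (l a) ^ 2) = l := funext fun a => Real.sq_sqrt (h0l a)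
  have eu : (fun a => Real.sqrt (u a) ^ 2) = u := funext fun a => Real.sq_sqrt (h0u a)
  refine ⟨hCi, ?_, integral_nonneg h0l, integral_mono hli hCi hlb, integral_mono hCi hui hub, ?_⟩
  · have pw : ∀ a, (Real.sqrt (l a) - Real.sqrt (u a)) ^ 2
        = l a + u a - 2 * (Real.sqrt (l a) * Real.sqrt (u a)) := fun a => by
      rw [sub_sq, Real.sq_sqrt (h0l a), Real.sq_sqrt (h0u a)]; ring
    calc ∫ a, (Real.sqrt (l a) - Real.sqrt (u a)) ^ 2 ∂μ
        = ∫ a, (l a + u a - 2 * (Real.sqrt (l a) * Real.sqrt (u a))) ∂μ := by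
          exact integral_congr_ae (Filter.Eventually.of_forall fun a => pw a)
      _ = (∫ a, l a ∂μ) + (∫ a, u a ∂μ) - 2 * ∫ a, Real.sqrt (l a) * Real.sqrt (u a) ∂μ := by
          have h1 : Integrable (fun a => l a + u a) μ := hli.add hui
          have h2 : Integrable (fun a => 2 * (Real.sqrt (l a) * Real.sqrt (u a))) μ :=
            hCi.const_mul 2
          rw [integral_sub h1 h2, integral_add hli hui, integral_const_mul]
  · have h := integral_CS μ (fun a => Real.sqrt (l a)) (fun a => Real.sqrt (u a)) hsl hsu
      (fun a => Real.sqrt_nonneg _) (fun a => Real.sqrt_nonneg _)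
      (by rw [el]; exact hli) (by rw [eu]; exact hui)
    rwa [el, eu] at h

private lemma sqrt_max_eq (x : ℝ) : Real.sqrt (max 0 x) = Real.sqrt x := by
  rcases le_total x 0 with h | h
  · rw [max_eq_left h, Real.sqrt_zero, eq_comm, Real.sqrt_eq_zero']
    exact h
  · rw [max_eq_right h]

/-- **Lemma 2: bracketing entropy of product densities.** -/
theorem bracket_cover_product (n : ℕ) (hn : 2 ≤ n)
    (α : Fin n → Type*) [∀ i, MeasurableSpace (α i)]
    (μ : ∀ i, Measure (α i)) [∀ i, SigmaFinite (μ i)]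
    (M : ∀ i, Set (α i → ℝ))
    (hM : ∀ i, ∀ s ∈ M i,
      Measurable s ∧ (∀ a, 0 ≤ s a) ∧ Integrable s (μ i) ∧ ∫ a, s a ∂(μ i) = 1)
    (δ : Fin n → ℝ) (hδ : ∀ i, 0 < δ i) (N : Fin n → ℕ)
    (hcov : ∀ i, IsBracketCover (μ i) (M i) (N i) (δ i)) :
    ∃ N' ≤ ∏ i, N i,
      IsBracketCover (Measure.pi μ)
        {s : (∀ i, α i) → ℝ | ∃ f : ∀ i, α i → ℝ,
          (∀ i, f i ∈ M i) ∧ ∀ x, s x = ∏ i, f i (x i)}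
        N' (∏ i, (1 + δ i) - 1) := by
  classical
  by_cases hne : ∀ i, (M i).Nonempty
  · choose g hg using hne
    choose lo up hbr hcover using hcov
    -- bound on the squared Hellinger integrand of the original brackets
    have hδ2 : ∀ i j,
        (∫ a, (Real.sqrt (lo i j a) - Real.sqrt (up i j a)) ^ 2 ∂(μ i)) ≤ δ i ^ 2 := by
      intro i j
      have h := (hbr i j).2.2.2.2
      have h0 : 0 ≤ ∫ a, (Real.sqrt (lo i j a) - Real.sqrt (up i j a)) ^ 2 ∂(μ i) :=
        integral_nonneg fun a => sq_nonneg _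
      calc (∫ a, (Real.sqrt (lo i j a) - Real.sqrt (up i j a)) ^ 2 ∂(μ i))
          = hellM (μ i) (lo i j) (up i j) ^ 2 := (Real.sq_sqrt h0).symm
        _ ≤ δ i ^ 2 := by
            apply pow_le_pow_left₀ (Real.sqrt_nonneg _) h
    -- the adjusted brackets
    have hLU : ∃ L U : ∀ i, Fin (N i) → α i → ℝ, ∀ i j,
        Measurable (L i j) ∧ Measurable (U i j) ∧
        Integrable (L i j) (μ i) ∧ Integrable (U i j) (μ i) ∧
        (∀ a, 0 ≤ L i j a) ∧ (∀ a, L i j a ≤ U i j a) ∧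
        (∫ a, L i j a ∂(μ i)) ≤ 1 ∧
        (∫ a, (Real.sqrt (L i j a) - Real.sqrt (U i j a)) ^ 2 ∂(μ i)) ≤ δ i ^ 2 ∧
        (∀ s ∈ M i, (∀ a, lo i j a ≤ s a ∧ s a ≤ up i j a) →
          ∀ a, L i j a ≤ s a ∧ s a ≤ U i j a) := by
      refine ⟨fun i j => if h : ∃ s ∈ M i, ∀ a, lo i j a ≤ s a ∧ s a ≤ up i j a
          then fun a => max 0 (lo i j a) else g i,
        fun i j => if h : ∃ s ∈ M i, ∀ a, lo i j a ≤ s a ∧ s a ≤ up i j a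
          then fun a => max 0 (up i j a) else g i, ?_⟩
      intro i j
      by_cases h : ∃ s ∈ M i, ∀ a, lo i j a ≤ s a ∧ s a ≤ up i j a
      · simp only [dif_pos h]
        obtain ⟨s₀, hs₀M, hs₀b⟩ := h
        obtain ⟨hs₀m, hs₀0, hs₀i, hs₀1⟩ := hM i s₀ hs₀M
        obtain ⟨hlom, hupm, hloi, hupi, -⟩ := hbr i j
        have hloint : Integrable (fun a => max 0 (lo i j a)) (μ i) := by
          have := hloi.pos_part
          simpa [max_comm] using this
        have hupint : Integrable (fun a => max 0 (up i j a)) (μ i) := by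
          have := hupi.pos_part
          simpa [max_comm] using this
        refine ⟨measurable_const.max hlom, measurable_const.max hupm, hloint, hupint,
          fun a => le_max_left _ _,
          fun a => max_le_max le_rfl ((hs₀b a).1.trans (hs₀b a).2), ?_, ?_, ?_⟩
        · calc (∫ a, max 0 (lo i j a) ∂(μ i)) ≤ ∫ a, s₀ a ∂(μ i) :=
              integral_mono hloint hs₀i fun a => max_le (hs₀0 a) (hs₀b a).1
            _ = 1 := hs₀1
        · have : ∀ a, (Real.sqrt (max 0 (lo i j a)) - Real.sqrt (max 0 (up i j a))) ^ 2
              = (Real.sqrt (lo i j a) - Real.sqrt (up i j a)) ^ 2 := fun a => by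
            rw [sqrt_max_eq, sqrt_max_eq]
          rw [integral_congr_ae (Filter.Eventually.of_forall this)]
          exact hδ2 i j
        · intro s hsM hb a
          obtain ⟨-, hs0, -, -⟩ := hM i s hsM
          exact ⟨max_le (hs0 a) (hb a).1, (hb a).2.trans (le_max_right _ _)⟩
      · simp only [dif_neg h]
        obtain ⟨hgm, hg0, hgi, hg1⟩ := hM i (g i) (hg i)
        refine ⟨hgm, hgm, hgi, hgi, hg0, fun a => le_rfl, le_of_eq hg1, ?_, ?_⟩
        · have hz : (fun a => (Real.sqrt (g i a) - Real.sqrt (g i a)) ^ 2)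
              = fun _ => (0:ℝ) := funext fun a => by ring
          rw [integral_congr_ae (Filter.Eventually.of_forall fun a => congrFun hz a),
            integral_zero]
          positivity
        · intro s hsM hb
          exact absurd ⟨s, hsM, hb⟩ h
    obtain ⟨L, U, hLU⟩ := hLU
    -- facts about the adjusted brackets
    have bf := fun i j => bracket_facts (μ i) (L i j) (U i j) (hLU i j).1 (hLU i j).2.1
      (hLU i j).2.2.1 (hLU i j).2.2.2.1 (hLU i j).2.2.2.2.1 (hLU i j).2.2.2.2.2.1
    letI : ∀ i, MeasureSpace (α i) := fun i => ⟨μ i⟩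
    haveI hsf : ∀ i, SigmaFinite (volume : Measure (α i)) := fun i =>
      (inferInstance : SigmaFinite (μ i))
    let e : (∀ i, Fin (N i)) ≃ Fin (∏ i, N i) := Fintype.equivFinOfCardEq (by simp)
    refine ⟨∏ i, N i, le_rfl, fun k x => ∏ i, L i (e.symm k i) (x i),
      fun k x => ∏ i, U i (e.symm k i) (x i), ?_, ?_⟩
    · intro k
      set c := e.symm k with hc
      have hLm : Measurable fun x : ∀ i, α i => ∏ i, L i (c i) (x i) :=
        Finset.measurable_prod _ fun i _ => ((hLU i (c i)).1).comp (measurable_pi_apply i)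
      have hUm : Measurable fun x : ∀ i, α i => ∏ i, U i (c i) (x i) :=
        Finset.measurable_prod _ fun i _ => ((hLU i (c i)).2.1).comp (measurable_pi_apply i)
      have hLint : Integrable (fun x : ∀ i, α i => ∏ i, L i (c i) (x i)) (Measure.pi μ) :=
        Integrable.fintype_prod_dep fun i => (hLU i (c i)).2.2.1
      have hUint : Integrable (fun x : ∀ i, α i => ∏ i, U i (c i) (x i)) (Measure.pi μ) :=
        Integrable.fintype_prod_dep fun i => (hLU i (c i)).2.2.2.1
      have hCint : Integrable
          (fun x : ∀ i, α i => ∏ i, Real.sqrt (L i (c i) (x i)) * Real.sqrt (U i (c i) (x i)))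
          (Measure.pi μ) :=
        Integrable.fintype_prod_dep fun i => (bf i (c i)).1
      refine ⟨hLm, hUm, hLint, hUint, ?_⟩
      -- compute the squared Hellinger distance of the product bracket
      have hU0 : ∀ i (a : α i), 0 ≤ U i (c i) a := fun i a =>
        ((hLU i (c i)).2.2.2.2.1 a).trans ((hLU i (c i)).2.2.2.2.2.1 a)
      have hpw : ∀ x : ∀ i, α i,
          (Real.sqrt (∏ i, L i (c i) (x i)) - Real.sqrt (∏ i, U i (c i) (x i))) ^ 2
          = (∏ i, L i (c i) (x i)) + (∏ i, U i (c i) (x i))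
            - 2 * ∏ i, Real.sqrt (L i (c i) (x i)) * Real.sqrt (U i (c i) (x i)) := by
        intro x
        rw [sqrt_finset_prod _ _ fun i _ => (hLU i (c i)).2.2.2.2.1 (x i),
          sqrt_finset_prod _ _ fun i _ => hU0 i (x i), sub_sq, Finset.prod_mul_distrib]
        have e1 : (∏ i, Real.sqrt (L i (c i) (x i))) ^ 2 = ∏ i, L i (c i) (x i) := by
          rw [← Finset.prod_pow]
          exact Finset.prod_congr rfl fun i _ => Real.sq_sqrt ((hLU i (c i)).2.2.2.2.1 (x i))
        have e2 : (∏ i, Real.sqrt (U i (c i) (x i))) ^ 2 = ∏ i, U i (c i) (x i) := by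
          rw [← Finset.prod_pow]
          exact Finset.prod_congr rfl fun i _ => Real.sq_sqrt (hU0 i (x i))
        rw [e1, e2]; ring
      have F1 : (∫ x : ∀ i, α i, ∏ i, L i (c i) (x i) ∂(Measure.pi μ))
          = ∏ i, ∫ a, L i (c i) a ∂(μ i) :=
        integral_fintype_prod_eq_prod fun i a => L i (c i) a
      have F2 : (∫ x : ∀ i, α i, ∏ i, U i (c i) (x i) ∂(Measure.pi μ))
          = ∏ i, ∫ a, U i (c i) a ∂(μ i) :=
        integral_fintype_prod_eq_prod fun i a => U i (c i) a
      have F3 : (∫ x : ∀ i, α i,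
            ∏ i, Real.sqrt (L i (c i) (x i)) * Real.sqrt (U i (c i) (x i)) ∂(Measure.pi μ))
          = ∏ i, ∫ a, Real.sqrt (L i (c i) a) * Real.sqrt (U i (c i) a) ∂(μ i) :=
        integral_fintype_prod_eq_prod
          fun i a => Real.sqrt (L i (c i) a) * Real.sqrt (U i (c i) a)
      have hIeq : (∫ x, (Real.sqrt (∏ i, L i (c i) (x i))
            - Real.sqrt (∏ i, U i (c i) (x i))) ^ 2 ∂(Measure.pi μ))
          = (∏ i, ∫ a, L i (c i) a ∂(μ i)) + (∏ i, ∫ a, U i (c i) a ∂(μ i))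
            - 2 * ∏ i, ∫ a, Real.sqrt (L i (c i) a) * Real.sqrt (U i (c i) a) ∂(μ i) := by
        calc (∫ x, (Real.sqrt (∏ i, L i (c i) (x i))
              - Real.sqrt (∏ i, U i (c i) (x i))) ^ 2 ∂(Measure.pi μ))
            = ∫ x, ((∏ i, L i (c i) (x i)) + (∏ i, U i (c i) (x i))
              - 2 * ∏ i, Real.sqrt (L i (c i) (x i)) * Real.sqrt (U i (c i) (x i)))
                ∂(Measure.pi μ) :=
              integral_congr_ae (Filter.Eventually.of_forall hpw)
          _ = _ := by
              have h1 : Integrable (fun x : ∀ i, α i =>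
                  (∏ i, L i (c i) (x i)) + (∏ i, U i (c i) (x i))) (Measure.pi μ) :=
                hLint.add hUint
              have h2 : Integrable (fun x : ∀ i, α i =>
                  2 * ∏ i, Real.sqrt (L i (c i) (x i)) * Real.sqrt (U i (c i) (x i)))
                  (Measure.pi μ) := hCint.const_mul 2
              rw [integral_sub h1 h2, integral_add hLint hUint, integral_const_mul, F1, F2, F3]
      -- apply the scalar inequality
      have hscal := scalar_key Finset.univ (fun i => ∫ a, L i (c i) a ∂(μ i))
        (fun i => ∫ a, U i (c i) a ∂(μ i))
        (fun i => ∫ a, Real.sqrt (L i (c i) a) * Real.sqrt (U i (c i) a) ∂(μ i)) δ ?_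
      · obtain ⟨-, -, -, -, -, -, hQ1, hkey⟩ := hscal
        show Real.sqrt _ ≤ _
        rw [hIeq]
        calc Real.sqrt ((∏ i, ∫ a, L i (c i) a ∂(μ i)) + (∏ i, ∫ a, U i (c i) a ∂(μ i))
              - 2 * ∏ i, ∫ a, Real.sqrt (L i (c i) a) * Real.sqrt (U i (c i) a) ∂(μ i))
            ≤ Real.sqrt (((∏ i, (1 + δ i)) - 1) ^ 2) := Real.sqrt_le_sqrt hkey
          _ = (∏ i, (1 + δ i)) - 1 := Real.sqrt_sq (by linarith)
      · intro i _
        have hb := bf i (c i)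
        have hh := hLU i (c i)
        have hAB : (∫ a, L i (c i) a ∂(μ i)) + (∫ a, U i (c i) a ∂(μ i))
            - 2 * ∫ a, Real.sqrt (L i (c i) a) * Real.sqrt (U i (c i) a) ∂(μ i) ≤ δ i ^ 2 := by
          rw [← hb.2.1]
          exact hh.2.2.2.2.2.2.2.1
        exact ⟨hb.2.2.1, hh.2.2.2.2.2.2.1, hb.2.2.2.1, hb.2.2.2.2.1, hb.2.2.2.2.2,
          (hδ i).le, hAB⟩
    · rintro s ⟨f, hf, hs⟩
      choose j hj using fun i => hcover i (f i) (hf i)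
      refine ⟨e j, fun x => ?_⟩
      have hsymm : e.symm (e j) = j := e.symm_apply_apply j
      simp only [hsymm]
      have hcomp := fun i => (hLU i (j i)).2.2.2.2.2.2.2.2 (f i) (hf i) (hj i)
      constructor
      · calc (∏ i, L i (j i) (x i)) ≤ ∏ i, f i (x i) :=
            Finset.prod_le_prod (fun i _ => (hLU i (j i)).2.2.2.2.1 (x i))
              (fun i _ => (hcomp i (x i)).1)
          _ = s x := (hs x).symm
      · calc s x = ∏ i, f i (x i) := hs x
          _ ≤ ∏ i, U i (j i) (x i) :=
            Finset.prod_le_prod (fun i _ => (hM i (f i) (hf i)).2.1 (x i))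
              (fun i _ => (hcomp i (x i)).2)
  · push_neg at hne
    obtain ⟨i₀, hi₀⟩ := hne
    refine ⟨0, Nat.zero_le _, fun k => k.elim0, fun k => k.elim0, fun k => k.elim0, ?_⟩
    rintro s ⟨f, hf, -⟩
    have := hf i₀
    rw [hi₀] at this
    exact absurd this (Set.notMem_empty _)

end
end

section
/- Let n ≥ 2, let (A, 𝒜, μ) be a σ-finite measure space, and for each 1 ≤ i ≤ n let M_i be a set of probability densities with respect to μ. Identify the simplex 𝕊_{n−1} with the set of probability densities on {1,…,n} with respect to counting measure. Let δ > 0 and η > 0. If 𝕊_{n−1} is covered by a finite family of N_0 brackets each of Hellinger diameter at most δ, and each M_i is covered by a finite family of N_i brackets each of Hellinger diameter at most η, then the mixture model M = { ∑_{i=1}^n π_i s_i : π ∈ 𝕊_{n−1}, s_i ∈ M_i } is covered by a finite family of at most N_0·∏_{i=1}^n N_i brackets, each of Hellinger diameter at most δ + η + δη. -/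
open MeasureTheory Real BigOperators

noncomputable section

/-- Hellinger distance between two functions on a finite type
(with respect to counting measure). -/
def hellF {𝒳 : Type*} [Fintype 𝒳] (p q : 𝒳 → ℝ) : ℝ :=
  Real.sqrt (∑ x, (Real.sqrt (p x) - Real.sqrt (q x)) ^ 2)

/- ### Auxiliary lemmas -/

lemma sqrtMax (x : ℝ) : Real.sqrt (max x 0) = Real.sqrt x := by
  rcases le_total x 0 with h | h
  · rw [max_eq_right h, Real.sqrt_zero, eq_comm]
    exact Real.sqrt_eq_zero'.mpr h
  · rw [max_eq_left h]

lemma sq_sqrt_le_abs (x : ℝ) : Real.sqrt x ^ 2 ≤ |x| := by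
  rcases le_total x 0 with h | h
  · rw [Real.sqrt_eq_zero'.mpr h]; simp [abs_nonneg x]
  · rw [Real.sq_sqrt h]; exact le_abs_self x

lemma mink_fin {ι : Type*} [Fintype ι] (x y : ι → ℝ) :
    Real.sqrt (∑ i, (x i + y i)^2) ≤ Real.sqrt (∑ i, x i ^2) + Real.sqrt (∑ i, y i ^2) := by
  have hcs := Real.sum_mul_le_sqrt_mul_sqrt Finset.univ x y
  have h1 : ∑ i, (x i + y i)^2 ≤ (Real.sqrt (∑ i, x i^2) + Real.sqrt (∑ i, y i^2))^2 := by
    have e2 : (Real.sqrt (∑ i, x i^2) + Real.sqrt (∑ i, y i^2))^2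
        = ∑ i, x i^2 + 2*(Real.sqrt (∑ i, x i^2) * Real.sqrt (∑ i, y i^2)) + ∑ i, y i^2 := by
      rw [add_sq, Real.sq_sqrt (by positivity), Real.sq_sqrt (by positivity)]; ring
    have e3 : ∑ i, (x i + y i)^2 = ∑ i, x i^2 + 2*(∑ i, x i * y i) + ∑ i, y i^2 := by
      simp only [add_sq]
      rw [Finset.sum_add_distrib, Finset.sum_add_distrib, Finset.mul_sum]
      congr 1; congr 1
      exact Finset.sum_congr rfl fun i _ => by ring
    rw [e2, e3]
    nlinarith [hcs]
  calc Real.sqrt (∑ i, (x i + y i)^2)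
      ≤ Real.sqrt ((Real.sqrt (∑ i, x i^2) + Real.sqrt (∑ i, y i^2))^2) := Real.sqrt_le_sqrt h1
    _ = _ := Real.sqrt_sq (by positivity)

lemma norm_sub_fin {ι : Type*} [Fintype ι] (x y : ι → ℝ) :
    Real.sqrt (∑ i, y i ^2) ≤ Real.sqrt (∑ i, x i ^2) + Real.sqrt (∑ i, (y i - x i) ^2) := by
  have := mink_fin x (fun i => y i - x i)
  simpa using this

lemma cs_integral {α : Type*} [MeasurableSpace α] (μ : Measure α) {X Y : α → ℝ}
    (hX : Measurable X) (hY : Measurable Y) (hX0 : ∀ a, 0 ≤ X a) (hY0 : ∀ a, 0 ≤ Y a)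
    (hX2 : Integrable (fun a => X a ^ 2) μ) (hY2 : Integrable (fun a => Y a ^ 2) μ) :
    ∫ a, X a * Y a ∂μ ≤ Real.sqrt (∫ a, X a ^ 2 ∂μ) * Real.sqrt (∫ a, Y a ^ 2 ∂μ) := by
  have hconj : (2:ℝ).HolderConjugate 2 := Real.holderConjugate_iff.mpr ⟨one_lt_two, by norm_num⟩
  have hXm : MemLp X (ENNReal.ofReal 2) μ := by
    rw [show ENNReal.ofReal 2 = 2 by norm_num]
    exact (memLp_two_iff_integrable_sq hX.aestronglyMeasurable).2 hX2
  have hYm : MemLp Y (ENNReal.ofReal 2) μ := by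
    rw [show ENNReal.ofReal 2 = 2 by norm_num]
    exact (memLp_two_iff_integrable_sq hY.aestronglyMeasurable).2 hY2
  have h := integral_mul_le_Lp_mul_Lq_of_nonneg hconj
    (Filter.Eventually.of_forall hX0) (Filter.Eventually.of_forall hY0) hXm hYm
  have e1 : ∀ (f : α → ℝ), (∫ a, f a ^ (2:ℝ) ∂μ) = ∫ a, f a ^ 2 ∂μ := by
    intro f; congr 1; funext a; rw [← Real.rpow_natCast (f a) 2]; norm_num
  rw [e1, e1] at h
  refine h.trans_eq ?_
  rw [Real.sqrt_eq_rpow, Real.sqrt_eq_rpow]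

lemma int_add_sq {α : Type*} [MeasurableSpace α] (μ : Measure α) {X Y : α → ℝ}
    (hX : Measurable X) (hY : Measurable Y) (hX0 : ∀ a, 0 ≤ X a) (hY0 : ∀ a, 0 ≤ Y a)
    (hX2 : Integrable (fun a => X a ^ 2) μ) (hY2 : Integrable (fun a => Y a ^ 2) μ) :
    ∫ a, (X a + Y a)^2 ∂μ
      ≤ (Real.sqrt (∫ a, X a ^ 2 ∂μ) + Real.sqrt (∫ a, Y a ^ 2 ∂μ))^2 := by
  have hXY : Integrable (fun a => X a * Y a) μ := by
    refine Integrable.mono' ((hX2.add hY2).div_const 2)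
      (hX.mul hY).aestronglyMeasurable (Filter.Eventually.of_forall fun a => ?_)
    rw [Real.norm_of_nonneg (mul_nonneg (hX0 a) (hY0 a))]
    have : X a * Y a ≤ (X a ^ 2 + Y a ^ 2) / 2 := by nlinarith [sq_nonneg (X a - Y a)]
    simpa using this
  have e1 : ∫ a, (X a + Y a)^2 ∂μ
      = ∫ a, X a ^2 ∂μ + 2 * ∫ a, X a * Y a ∂μ + ∫ a, Y a^2 ∂μ := by
    have : (fun a => (X a + Y a)^2) = fun a => X a^2 + 2*(X a * Y a) + Y a^2 := by
      funext a; ring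
    rw [this]
    have h1 : Integrable (fun a => X a ^ 2 + 2 * (X a * Y a)) μ := hX2.add (hXY.const_mul 2)
    have h2 : Integrable (fun a => 2 * (X a * Y a)) μ := hXY.const_mul 2
    rw [integral_add h1 hY2, integral_add hX2 h2, MeasureTheory.integral_const_mul]
  rw [e1, add_sq, Real.sq_sqrt (integral_nonneg fun a => sq_nonneg _),
    Real.sq_sqrt (integral_nonneg fun a => sq_nonneg _)]
  have := cs_integral μ hX hY hX0 hY0 hX2 hY2
  nlinarith [this]

lemma sq_sqrt_sub_int {α : Type*} [MeasurableSpace α] {μ : Measure α} {f g : α → ℝ}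
    (hf : Measurable f) (hg : Measurable g) (hfi : Integrable f μ) (hgi : Integrable g μ) :
    Integrable (fun a => (Real.sqrt (f a) - Real.sqrt (g a))^2) μ := by
  refine Integrable.mono' ((hfi.abs.const_mul 2).add (hgi.abs.const_mul 2))
    ((hf.sqrt.sub hg.sqrt).pow_const 2).aestronglyMeasurable
    (Filter.Eventually.of_forall fun a => ?_)
  rw [Real.norm_of_nonneg (sq_nonneg _)]
  simp only [Pi.add_apply]
  have h1 := sq_sqrt_le_abs (f a)
  have h2 := sq_sqrt_le_abs (g a)
  nlinarith [Real.sqrt_nonneg (f a), Real.sqrt_nonneg (g a),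
    sq_nonneg (Real.sqrt (f a) + Real.sqrt (g a))]

lemma hell_mix_bound {α : Type*} [MeasurableSpace α] (μ : Measure α) {n : ℕ} {δ η : ℝ}
    (hδ : 0 ≤ δ) (hη : 0 ≤ η)
    (A B : Fin n → ℝ) (u v : Fin n → α → ℝ)
    (hA0 : ∀ i, 0 ≤ A i) (hAB : ∀ i, A i ≤ B i) (hAsum : ∑ i, A i ≤ 1)
    (hABd : ∑ i, (Real.sqrt (B i) - Real.sqrt (A i))^2 ≤ δ^2)
    (hum : ∀ i, Measurable (u i)) (hvm : ∀ i, Measurable (v i))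
    (hu0 : ∀ i a, 0 ≤ u i a) (huv : ∀ i a, u i a ≤ v i a)
    (hui : ∀ i, Integrable (u i) μ) (hvi : ∀ i, Integrable (v i) μ)
    (hd2 : ∀ i, ∫ a, (Real.sqrt (v i a) - Real.sqrt (u i a))^2 ∂μ ≤ η^2)
    (hvint : ∀ i, ∫ a, v i a ∂μ ≤ (1+η)^2) :
    hellM μ (fun a => ∑ i, A i * u i a) (fun a => ∑ i, B i * v i a) ≤ δ + η + δ*η := by
  have hB0 : ∀ i, 0 ≤ B i := fun i => (hA0 i).trans (hAB i)
  have hv0 : ∀ i a, 0 ≤ v i a := fun i a => (hu0 i a).trans (huv i a)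
  set L : α → ℝ := fun a => ∑ i, A i * u i a with hL
  set U : α → ℝ := fun a => ∑ i, B i * v i a with hU
  set SX : α → ℝ := fun a => ∑ i, A i * (Real.sqrt (v i a) - Real.sqrt (u i a))^2 with hSX
  set SY : α → ℝ := fun a => ∑ i, (Real.sqrt (B i) - Real.sqrt (A i))^2 * v i a with hSY
  set X : α → ℝ := fun a => Real.sqrt (SX a) with hXdef
  set Y : α → ℝ := fun a => Real.sqrt (SY a) with hYdef
  have hSX0 : ∀ a, 0 ≤ SX a := fun a =>
    Finset.sum_nonneg fun i _ => mul_nonneg (hA0 i) (sq_nonneg _)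
  have hSY0 : ∀ a, 0 ≤ SY a := fun a =>
    Finset.sum_nonneg fun i _ => mul_nonneg (sq_nonneg _) (hv0 i a)
  have hX2eq : (fun a => X a ^ 2) = SX := funext fun a => Real.sq_sqrt (hSX0 a)
  have hY2eq : (fun a => Y a ^ 2) = SY := funext fun a => Real.sq_sqrt (hSY0 a)
  have Iduv : ∀ i, Integrable (fun a => (Real.sqrt (v i a) - Real.sqrt (u i a))^2) μ :=
    fun i => sq_sqrt_sub_int (hvm i) (hum i) (hvi i) (hui i)
  have ISX : Integrable SX μ :=
    integrable_finset_sum _ fun i _ => (Iduv i).const_mul (A i)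
  have ISY : Integrable SY μ :=
    integrable_finset_sum _ fun i _ => (hvi i).const_mul _
  have hSXm : Measurable SX := Finset.measurable_sum _ fun i _ =>
    (((hvm i).sqrt.sub (hum i).sqrt).pow_const 2).const_mul (A i)
  have hSYm : Measurable SY := Finset.measurable_sum _ fun i _ =>
    ((hvm i).const_mul _)
  have hXm : Measurable X := hSXm.sqrt
  have hYm : Measurable Y := hSYm.sqrt
  have IX2 : Integrable (fun a => X a ^ 2) μ := by rw [hX2eq]; exact ISX
  have IY2 : Integrable (fun a => Y a ^ 2) μ := by rw [hY2eq]; exact ISY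
  have hIX : ∫ a, X a ^ 2 ∂μ ≤ η^2 := by
    rw [hX2eq, hSX]
    rw [integral_finset_sum _ fun i _ => (Iduv i).const_mul (A i)]
    calc ∑ i, ∫ a, A i * (Real.sqrt (v i a) - Real.sqrt (u i a))^2 ∂μ
        = ∑ i, A i * ∫ a, (Real.sqrt (v i a) - Real.sqrt (u i a))^2 ∂μ := by
          exact Finset.sum_congr rfl fun i _ => MeasureTheory.integral_const_mul _ _
      _ ≤ ∑ i, A i * η^2 :=
          Finset.sum_le_sum fun i _ => mul_le_mul_of_nonneg_left (hd2 i) (hA0 i)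
      _ = (∑ i, A i) * η^2 := by rw [← Finset.sum_mul]
      _ ≤ 1 * η^2 := mul_le_mul_of_nonneg_right hAsum (sq_nonneg _)
      _ = η^2 := one_mul _
  have hIY : ∫ a, Y a ^ 2 ∂μ ≤ δ^2 * (1+η)^2 := by
    rw [hY2eq, hSY]
    rw [integral_finset_sum _ fun i _ => (hvi i).const_mul _]
    calc ∑ i, ∫ a, (Real.sqrt (B i) - Real.sqrt (A i))^2 * v i a ∂μ
        = ∑ i, (Real.sqrt (B i) - Real.sqrt (A i))^2 * ∫ a, v i a ∂μ := by
          exact Finset.sum_congr rfl fun i _ => MeasureTheory.integral_const_mul _ _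
      _ ≤ ∑ i, (Real.sqrt (B i) - Real.sqrt (A i))^2 * (1+η)^2 :=
          Finset.sum_le_sum fun i _ => mul_le_mul_of_nonneg_left (hvint i) (sq_nonneg _)
      _ = (∑ i, (Real.sqrt (B i) - Real.sqrt (A i))^2) * (1+η)^2 := by rw [← Finset.sum_mul]
      _ ≤ δ^2 * (1+η)^2 := mul_le_mul_of_nonneg_right hABd (sq_nonneg _)
  have hsX : Real.sqrt (∫ a, X a ^ 2 ∂μ) ≤ η :=
    (Real.sqrt_le_sqrt hIX).trans_eq (Real.sqrt_sq hη)
  have hsY : Real.sqrt (∫ a, Y a ^ 2 ∂μ) ≤ δ * (1+η) := by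
    refine (Real.sqrt_le_sqrt hIY).trans_eq ?_
    rw [show δ^2 * (1+η)^2 = (δ*(1+η))^2 by ring, Real.sqrt_sq (by positivity)]
  have hpt : ∀ a, (Real.sqrt (L a) - Real.sqrt (U a))^2 ≤ (X a + Y a)^2 := by
    intro a
    have hLU : L a ≤ U a := Finset.sum_le_sum fun i _ =>
      mul_le_mul (hAB i) (huv i a) (hu0 i a) (hB0 i)
    have hXY0 : 0 ≤ X a + Y a := add_nonneg (Real.sqrt_nonneg _) (Real.sqrt_nonneg _)
    have hup : Real.sqrt (U a) ≤ Real.sqrt (L a) + (X a + Y a) := by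
      set x : Fin n → ℝ := fun i => Real.sqrt (A i) * Real.sqrt (u i a) with hx
      set y : Fin n → ℝ := fun i => Real.sqrt (B i) * Real.sqrt (v i a) with hy
      have ex : Real.sqrt (L a) = Real.sqrt (∑ i, x i ^2) := by
        congr 1
        refine Finset.sum_congr rfl fun i _ => ?_
        rw [hx]; rw [mul_pow, Real.sq_sqrt (hA0 i), Real.sq_sqrt (hu0 i a)]
      have ey : Real.sqrt (U a) = Real.sqrt (∑ i, y i ^2) := by
        congr 1
        refine Finset.sum_congr rfl fun i _ => ?_
        rw [hy]; rw [mul_pow, Real.sq_sqrt (hB0 i), Real.sq_sqrt (hv0 i a)]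
      rw [ex, ey]
      refine (norm_sub_fin x y).trans ?_
      have hd : Real.sqrt (∑ i, (y i - x i)^2) ≤ X a + Y a := by
        have e3 : ∀ i : Fin n, y i - x i
            = (Real.sqrt (A i) * (Real.sqrt (v i a) - Real.sqrt (u i a)))
              + ((Real.sqrt (B i) - Real.sqrt (A i)) * Real.sqrt (v i a)) := by
          intro i; rw [hx, hy]; ring
        calc Real.sqrt (∑ i, (y i - x i)^2)
            = Real.sqrt (∑ i, ((Real.sqrt (A i) * (Real.sqrt (v i a) - Real.sqrt (u i a)))
              + ((Real.sqrt (B i) - Real.sqrt (A i)) * Real.sqrt (v i a)))^2) := by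
              congr 1; exact Finset.sum_congr rfl fun i _ => by rw [e3]
          _ ≤ Real.sqrt (∑ i, (Real.sqrt (A i) * (Real.sqrt (v i a) - Real.sqrt (u i a)))^2)
              + Real.sqrt (∑ i, ((Real.sqrt (B i) - Real.sqrt (A i)) * Real.sqrt (v i a))^2) :=
              mink_fin _ _
          _ = X a + Y a := by
              congr 1
              · rw [hXdef, hSX]
                congr 1
                exact Finset.sum_congr rfl fun i _ => by
                  rw [mul_pow, Real.sq_sqrt (hA0 i)]
              · rw [hYdef, hSY]
                congr 1
                exact Finset.sum_congr rfl fun i _ => by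
                  rw [mul_pow, Real.sq_sqrt (hv0 i a)]
      linarith [hd]
    have hlo : Real.sqrt (L a) ≤ Real.sqrt (U a) := Real.sqrt_le_sqrt hLU
    exact sq_le_sq' (by linarith) (by linarith)
  have hLm : Measurable L := Finset.measurable_sum _ fun i _ => (hum i).const_mul _
  have hUm : Measurable U := Finset.measurable_sum _ fun i _ => (hvm i).const_mul _
  have IL : Integrable L μ := integrable_finset_sum _ fun i _ => (hui i).const_mul _
  have IU : Integrable U μ := integrable_finset_sum _ fun i _ => (hvi i).const_mul _
  have ILU : Integrable (fun a => (Real.sqrt (L a) - Real.sqrt (U a))^2) μ :=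
    sq_sqrt_sub_int hLm hUm IL IU
  have IXY : Integrable (fun a => (X a + Y a)^2) μ := by
    refine Integrable.mono' ((ISX.const_mul 2).add (ISY.const_mul 2))
      ((hXm.add hYm).pow_const 2).aestronglyMeasurable
      (Filter.Eventually.of_forall fun a => ?_)
    rw [Real.norm_of_nonneg (sq_nonneg _)]
    simp only [Pi.add_apply]
    have e1 : X a ^ 2 = SX a := congrFun hX2eq a
    have e2 : Y a ^ 2 = SY a := congrFun hY2eq a
    nlinarith [sq_nonneg (X a - Y a)]
  have key : ∫ a, (Real.sqrt (L a) - Real.sqrt (U a))^2 ∂μ ≤ (δ + η + δ*η)^2 :=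
    calc ∫ a, (Real.sqrt (L a) - Real.sqrt (U a))^2 ∂μ
        ≤ ∫ a, (X a + Y a)^2 ∂μ := integral_mono ILU IXY hpt
      _ ≤ (Real.sqrt (∫ a, X a ^ 2 ∂μ) + Real.sqrt (∫ a, Y a ^ 2 ∂μ))^2 :=
          int_add_sq μ hXm hYm (fun a => Real.sqrt_nonneg _) (fun a => Real.sqrt_nonneg _) IX2 IY2
      _ ≤ (η + δ*(1+η))^2 := by
          have h0 : 0 ≤ Real.sqrt (∫ a, X a ^ 2 ∂μ) + Real.sqrt (∫ a, Y a ^ 2 ∂μ) :=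
            add_nonneg (Real.sqrt_nonneg _) (Real.sqrt_nonneg _)
          exact pow_le_pow_left₀ h0 (add_le_add hsX hsY) 2
      _ = (δ + η + δ*η)^2 := by ring
  rw [hellM]
  exact (Real.sqrt_le_sqrt key).trans_eq (Real.sqrt_sq (by positivity))

/-- **Lemma 3: bracketing entropy of mixture densities.** -/
theorem bracket_cover_mixture {α : Type*} [MeasurableSpace α] (μ : Measure α)
    [SigmaFinite μ] (n : ℕ) (hn : 2 ≤ n)
    (M : Fin n → Set (α → ℝ))
    (hM : ∀ i, ∀ s ∈ M i,
      Measurable s ∧ (∀ a, 0 ≤ s a) ∧ Integrable s μ ∧ ∫ a, s a ∂μ = 1)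
    (δ η : ℝ) (hδ : 0 < δ) (hη : 0 < η)
    (N₀ : ℕ) (N : Fin n → ℕ)
    -- a bracket covering of the simplex, seen as the set of probability
    -- densities on {1,…,n} with respect to counting measure
    (hcov0 : ∃ plo pup : Fin N₀ → Fin n → ℝ,
      (∀ j, hellF (plo j) (pup j) ≤ δ) ∧
      ∀ p ∈ stdSimplex ℝ (Fin n), ∃ j, ∀ i, plo j i ≤ p i ∧ p i ≤ pup j i)
    (hcov : ∀ i, IsBracketCover μ (M i) (N i) η) :
    ∃ N' ≤ N₀ * ∏ i, N i,
      IsBracketCover μ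
        {s : α → ℝ | ∃ (p : Fin n → ℝ) (f : Fin n → α → ℝ),
          p ∈ stdSimplex ℝ (Fin n) ∧ (∀ i, f i ∈ M i) ∧
          ∀ a, s a = ∑ i, p i * f i a}
        N' (δ + η + δ * η) := by
  classical
  obtain ⟨plo, pup, hpd, hpcov⟩ := hcov0
  choose lo up hbr hbcov using hcov
  have hlom : ∀ i k, Measurable (lo i k) := fun i k => (hbr i k).1
  have hupm : ∀ i k, Measurable (up i k) := fun i k => (hbr i k).2.1
  have hloi : ∀ i k, Integrable (lo i k) μ := fun i k => (hbr i k).2.2.1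
  have hupi : ∀ i k, Integrable (up i k) μ := fun i k => (hbr i k).2.2.2.1
  have hhell : ∀ i k, hellM μ (lo i k) (up i k) ≤ η := fun i k => (hbr i k).2.2.2.2
  -- the modified simplex brackets
  have hABex : ∃ A B : Fin N₀ → Fin n → ℝ,
      (∀ j i, 0 ≤ A j i) ∧ (∀ j i, A j i ≤ B j i) ∧ (∀ j, ∑ i, A j i ≤ 1) ∧
      (∀ j, ∑ i, (Real.sqrt (B j i) - Real.sqrt (A j i))^2 ≤ δ^2) ∧
      (∀ j, ∀ p ∈ stdSimplex ℝ (Fin n), (∀ i, plo j i ≤ p i ∧ p i ≤ pup j i) →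
        ∀ i, A j i ≤ p i ∧ p i ≤ B j i) := by
    have hpd' : ∀ j, ∑ i, (Real.sqrt (plo j i) - Real.sqrt (pup j i))^2 ≤ δ^2 := by
      intro j
      have h := hpd j
      rw [hellF] at h
      have h0 : 0 ≤ ∑ i, (Real.sqrt (plo j i) - Real.sqrt (pup j i))^2 :=
        Finset.sum_nonneg fun i _ => sq_nonneg _
      calc ∑ i, (Real.sqrt (plo j i) - Real.sqrt (pup j i))^2
          = Real.sqrt (∑ i, (Real.sqrt (plo j i) - Real.sqrt (pup j i))^2) ^ 2 :=
            (Real.sq_sqrt h0).symm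
        _ ≤ δ^2 := pow_le_pow_left₀ (Real.sqrt_nonneg _) h 2
    refine ⟨fun j i =>
        if (∃ p ∈ stdSimplex ℝ (Fin n), ∀ i', plo j i' ≤ p i' ∧ p i' ≤ pup j i')
        then min (max (plo j i) 0) (max (pup j i) 0) else 0,
      fun j i =>
        if (∃ p ∈ stdSimplex ℝ (Fin n), ∀ i', plo j i' ≤ p i' ∧ p i' ≤ pup j i')
        then max (pup j i) 0 else 0, ?_, ?_, ?_, ?_, ?_⟩
    · intro j i
      by_cases h : ∃ p ∈ stdSimplex ℝ (Fin n), ∀ i', plo j i' ≤ p i' ∧ p i' ≤ pup j i'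
      · simp only [if_pos h]; exact le_min (le_max_right _ _) (le_max_right _ _)
      · simp only [if_neg h]; exact le_refl _
    · intro j i
      by_cases h : ∃ p ∈ stdSimplex ℝ (Fin n), ∀ i', plo j i' ≤ p i' ∧ p i' ≤ pup j i'
      · simp only [if_pos h]; exact min_le_right _ _
      · simp only [if_neg h]; exact le_refl _
    · intro j
      by_cases h : ∃ p ∈ stdSimplex ℝ (Fin n), ∀ i', plo j i' ≤ p i' ∧ p i' ≤ pup j i'
      · obtain ⟨p₀, hp₀, hbrk⟩ := h
        have h' : ∃ p ∈ stdSimplex ℝ (Fin n), ∀ i', plo j i' ≤ p i' ∧ p i' ≤ pup j i' :=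
          ⟨p₀, hp₀, hbrk⟩
        simp only [if_pos h']
        calc ∑ i, min (max (plo j i) 0) (max (pup j i) 0)
            ≤ ∑ i, p₀ i := Finset.sum_le_sum fun i _ =>
              (min_le_left _ _).trans (max_le (hbrk i).1 (hp₀.1 i))
          _ = 1 := hp₀.2
      · simp only [if_neg h, Finset.sum_const_zero]; norm_num
    · intro j
      by_cases h : ∃ p ∈ stdSimplex ℝ (Fin n), ∀ i', plo j i' ≤ p i' ∧ p i' ≤ pup j i'
      · simp only [if_pos h]
        refine (Finset.sum_le_sum fun i _ => ?_).trans (hpd' j)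
        rcases le_total (max (plo j i) 0) (max (pup j i) 0) with hle | hle
        · rw [min_eq_left hle, sqrtMax, sqrtMax]
          exact le_of_eq (by ring)
        · rw [min_eq_right hle]
          simpa using sq_nonneg (Real.sqrt (plo j i) - Real.sqrt (pup j i))
      · simp only [if_neg h]
        simpa using sq_nonneg δ
    · intro j p hp hbrk i
      have h : ∃ p ∈ stdSimplex ℝ (Fin n), ∀ i', plo j i' ≤ p i' ∧ p i' ≤ pup j i' :=
        ⟨p, hp, hbrk⟩
      simp only [if_pos h]
      constructor
      · exact (min_le_left _ _).trans (max_le (hbrk i).1 (hp.1 i))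
      · exact (hbrk i).2.trans (le_max_left _ _)
  obtain ⟨A, B, hA0, hAB, hAsum, hABd, hApB⟩ := hABex
  -- the modified function brackets
  have huvex : ∀ i : Fin n, ∃ u v : Fin (N i) → α → ℝ,
      (∀ k, Measurable (u k)) ∧ (∀ k, Measurable (v k)) ∧
      (∀ k a, 0 ≤ u k a) ∧ (∀ k a, u k a ≤ v k a) ∧
      (∀ k, Integrable (u k) μ) ∧ (∀ k, Integrable (v k) μ) ∧
      (∀ k, ∫ a, (Real.sqrt (v k a) - Real.sqrt (u k a))^2 ∂μ ≤ η^2) ∧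
      (∀ k, ∫ a, v k a ∂μ ≤ (1+η)^2) ∧
      (∀ k, ∀ f ∈ M i, (∀ a, lo i k a ≤ f a ∧ f a ≤ up i k a) →
        ∀ a, u k a ≤ f a ∧ f a ≤ v k a) := by
    intro i
    have hηsq : ∀ k, ∫ a, (Real.sqrt (lo i k a) - Real.sqrt (up i k a))^2 ∂μ ≤ η^2 := by
      intro k
      have h := hhell i k
      rw [hellM] at h
      have h0 : 0 ≤ ∫ a, (Real.sqrt (lo i k a) - Real.sqrt (up i k a))^2 ∂μ :=
        integral_nonneg fun a => sq_nonneg _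
      calc ∫ a, (Real.sqrt (lo i k a) - Real.sqrt (up i k a))^2 ∂μ
          = Real.sqrt (∫ a, (Real.sqrt (lo i k a) - Real.sqrt (up i k a))^2 ∂μ) ^ 2 :=
            (Real.sq_sqrt h0).symm
        _ ≤ η^2 := pow_le_pow_left₀ (Real.sqrt_nonneg _) h 2
    refine ⟨fun k a =>
        if (∃ f ∈ M i, ∀ a', lo i k a' ≤ f a' ∧ f a' ≤ up i k a')
        then min (max (lo i k a) 0) (max (up i k a) 0) else 0,
      fun k a =>
        if (∃ f ∈ M i, ∀ a', lo i k a' ≤ f a' ∧ f a' ≤ up i k a')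
        then max (up i k a) 0 else 0, ?_, ?_, ?_, ?_, ?_, ?_, ?_, ?_, ?_⟩
    · intro k
      by_cases h : ∃ f ∈ M i, ∀ a', lo i k a' ≤ f a' ∧ f a' ≤ up i k a'
      · simp only [if_pos h]
        exact ((hlom i k).max measurable_const).min ((hupm i k).max measurable_const)
      · simp only [if_neg h]; exact measurable_const
    · intro k
      by_cases h : ∃ f ∈ M i, ∀ a', lo i k a' ≤ f a' ∧ f a' ≤ up i k a'
      · simp only [if_pos h]
        exact (hupm i k).max measurable_const
      · simp only [if_neg h]; exact measurable_const
    · intro k a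
      by_cases h : ∃ f ∈ M i, ∀ a', lo i k a' ≤ f a' ∧ f a' ≤ up i k a'
      · simp only [if_pos h]; exact le_min (le_max_right _ _) (le_max_right _ _)
      · simp only [if_neg h]; exact le_refl _
    · intro k a
      by_cases h : ∃ f ∈ M i, ∀ a', lo i k a' ≤ f a' ∧ f a' ≤ up i k a'
      · simp only [if_pos h]; exact min_le_right _ _
      · simp only [if_neg h]; exact le_refl _
    · intro k
      by_cases h : ∃ f ∈ M i, ∀ a', lo i k a' ≤ f a' ∧ f a' ≤ up i k a'
      · simp only [if_pos h]
        refine Integrable.mono' ((hloi i k).abs.add (hupi i k).abs)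
          (((hlom i k).max measurable_const).min
            ((hupm i k).max measurable_const)).aestronglyMeasurable
          (Filter.Eventually.of_forall fun a => ?_)
        rw [Real.norm_of_nonneg (le_min (le_max_right _ _) (le_max_right _ _))]
        simp only [Pi.add_apply]
        have h1 : min (max (lo i k a) 0) (max (up i k a) 0) ≤ max (up i k a) 0 :=
          min_le_right _ _
        have h2 : max (up i k a) 0 ≤ |up i k a| := max_le (le_abs_self _) (abs_nonneg _)
        have h3 : (0:ℝ) ≤ |lo i k a| := abs_nonneg _
        linarith
      · simp only [if_neg h]; exact integrable_zero _ _ _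
    · intro k
      by_cases h : ∃ f ∈ M i, ∀ a', lo i k a' ≤ f a' ∧ f a' ≤ up i k a'
      · simp only [if_pos h]
        refine Integrable.mono' (hupi i k).abs
          ((hupm i k).max measurable_const).aestronglyMeasurable
          (Filter.Eventually.of_forall fun a => ?_)
        rw [Real.norm_of_nonneg (le_max_right _ _)]
        exact max_le (le_abs_self _) (abs_nonneg _)
      · simp only [if_neg h]; exact integrable_zero _ _ _
    · intro k
      by_cases h : ∃ f ∈ M i, ∀ a', lo i k a' ≤ f a' ∧ f a' ≤ up i k a'
      · simp only [if_pos h]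
        have hmu : Measurable (fun a => min (max (lo i k a) 0) (max (up i k a) 0)) :=
          ((hlom i k).max measurable_const).min ((hupm i k).max measurable_const)
        have hmv : Measurable (fun a => max (up i k a) 0) :=
          (hupm i k).max measurable_const
        have hiu : Integrable (fun a => min (max (lo i k a) 0) (max (up i k a) 0)) μ := by
          refine Integrable.mono' ((hloi i k).abs.add (hupi i k).abs)
            hmu.aestronglyMeasurable (Filter.Eventually.of_forall fun a => ?_)
          rw [Real.norm_of_nonneg (le_min (le_max_right _ _) (le_max_right _ _))]
          simp only [Pi.add_apply]
          have h1 : min (max (lo i k a) 0) (max (up i k a) 0) ≤ max (up i k a) 0 :=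
            min_le_right _ _
          have h2 : max (up i k a) 0 ≤ |up i k a| := max_le (le_abs_self _) (abs_nonneg _)
          have h3 : (0:ℝ) ≤ |lo i k a| := abs_nonneg _
          linarith
        have hiv : Integrable (fun a => max (up i k a) 0) μ := by
          refine Integrable.mono' (hupi i k).abs
            hmv.aestronglyMeasurable (Filter.Eventually.of_forall fun a => ?_)
          rw [Real.norm_of_nonneg (le_max_right _ _)]
          exact max_le (le_abs_self _) (abs_nonneg _)
        refine le_trans (integral_mono (sq_sqrt_sub_int hmv hmu hiv hiu)
          (sq_sqrt_sub_int (hlom i k) (hupm i k) (hloi i k) (hupi i k)) fun a => ?_) (hηsq k)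
        rcases le_total (max (lo i k a) 0) (max (up i k a) 0) with hle | hle
        · rw [min_eq_left hle, sqrtMax, sqrtMax]
          exact le_of_eq (by ring)
        · rw [min_eq_right hle]
          simpa using sq_nonneg (Real.sqrt (lo i k a) - Real.sqrt (up i k a))
      · simp only [if_neg h]
        simpa using sq_nonneg η
    · intro k
      by_cases h : ∃ f ∈ M i, ∀ a', lo i k a' ≤ f a' ∧ f a' ≤ up i k a'
      · simp only [if_pos h]
        obtain ⟨f₀, hf₀M, hf₀⟩ := h
        have hmu : Measurable (fun a => min (max (lo i k a) 0) (max (up i k a) 0)) :=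
          ((hlom i k).max measurable_const).min ((hupm i k).max measurable_const)
        have hmv : Measurable (fun a => max (up i k a) 0) :=
          (hupm i k).max measurable_const
        have hiu : Integrable (fun a => min (max (lo i k a) 0) (max (up i k a) 0)) μ := by
          refine Integrable.mono' ((hloi i k).abs.add (hupi i k).abs)
            hmu.aestronglyMeasurable (Filter.Eventually.of_forall fun a => ?_)
          rw [Real.norm_of_nonneg (le_min (le_max_right _ _) (le_max_right _ _))]
          simp only [Pi.add_apply]
          have h1 : min (max (lo i k a) 0) (max (up i k a) 0) ≤ max (up i k a) 0 :=
            min_le_right _ _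
          have h2 : max (up i k a) 0 ≤ |up i k a| := max_le (le_abs_self _) (abs_nonneg _)
          have h3 : (0:ℝ) ≤ |lo i k a| := abs_nonneg _
          linarith
        have hiv : Integrable (fun a => max (up i k a) 0) μ := by
          refine Integrable.mono' (hupi i k).abs
            hmv.aestronglyMeasurable (Filter.Eventually.of_forall fun a => ?_)
          rw [Real.norm_of_nonneg (le_max_right _ _)]
          exact max_le (le_abs_self _) (abs_nonneg _)
        have hu0' : ∀ a, (0:ℝ) ≤ min (max (lo i k a) 0) (max (up i k a) 0) :=
          fun a => le_min (le_max_right _ _) (le_max_right _ _)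
        have huv' : ∀ a, min (max (lo i k a) 0) (max (up i k a) 0) ≤ max (up i k a) 0 :=
          fun a => min_le_right _ _
        have husum : ∫ a, min (max (lo i k a) 0) (max (up i k a) 0) ∂μ ≤ 1 := by
          have hle : ∀ a, min (max (lo i k a) 0) (max (up i k a) 0) ≤ f₀ a := fun a =>
            (min_le_left _ _).trans (max_le (hf₀ a).1 ((hM i f₀ hf₀M).2.1 a))
          calc ∫ a, min (max (lo i k a) 0) (max (up i k a) 0) ∂μ
              ≤ ∫ a, f₀ a ∂μ := integral_mono hiu (hM i f₀ hf₀M).2.2.1 hle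
            _ = 1 := (hM i f₀ hf₀M).2.2.2
        have hd2' : ∫ a, (Real.sqrt (max (up i k a) 0)
            - Real.sqrt (min (max (lo i k a) 0) (max (up i k a) 0)))^2 ∂μ ≤ η^2 := by
          refine le_trans (integral_mono (sq_sqrt_sub_int hmv hmu hiv hiu)
            (sq_sqrt_sub_int (hlom i k) (hupm i k) (hloi i k) (hupi i k)) fun a => ?_) (hηsq k)
          rcases le_total (max (lo i k a) 0) (max (up i k a) 0) with hle | hle
          · rw [min_eq_left hle, sqrtMax, sqrtMax]
            exact le_of_eq (by ring)
          · rw [min_eq_right hle]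
            simpa using sq_nonneg (Real.sqrt (lo i k a) - Real.sqrt (up i k a))
        -- now apply int_add_sq with X = √u, Y = √v - √u
        set Uu : α → ℝ := fun a => min (max (lo i k a) 0) (max (up i k a) 0) with hUu
        set Vv : α → ℝ := fun a => max (up i k a) 0 with hVv
        have hXm : Measurable (fun a => Real.sqrt (Uu a)) := hmu.sqrt
        have hYm : Measurable (fun a => Real.sqrt (Vv a) - Real.sqrt (Uu a)) :=
          hmv.sqrt.sub hmu.sqrt
        have hX0 : ∀ a, 0 ≤ Real.sqrt (Uu a) := fun a => Real.sqrt_nonneg _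
        have hY0 : ∀ a, 0 ≤ Real.sqrt (Vv a) - Real.sqrt (Uu a) := fun a =>
          sub_nonneg.mpr (Real.sqrt_le_sqrt (huv' a))
        have hX2 : Integrable (fun a => Real.sqrt (Uu a) ^ 2) μ := by
          have : (fun a => Real.sqrt (Uu a) ^ 2) = Uu :=
            funext fun a => Real.sq_sqrt (hu0' a)
          rw [this]; exact hiu
        have hY2 : Integrable (fun a => (Real.sqrt (Vv a) - Real.sqrt (Uu a)) ^ 2) μ :=
          sq_sqrt_sub_int hmv hmu hiv hiu
        have key := int_add_sq μ hXm hYm hX0 hY0 hX2 hY2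
        have e : (fun a => (Real.sqrt (Uu a) + (Real.sqrt (Vv a) - Real.sqrt (Uu a)))^2) = Vv := by
          funext a
          have h1 : Real.sqrt (Uu a) + (Real.sqrt (Vv a) - Real.sqrt (Uu a))
              = Real.sqrt (Vv a) := by ring
          rw [h1, Real.sq_sqrt ((hu0' a).trans (huv' a))]
        rw [e] at key
        have hX2int : ∫ a, Real.sqrt (Uu a) ^ 2 ∂μ ≤ 1 := by
          have : (fun a => Real.sqrt (Uu a) ^ 2) = Uu :=
            funext fun a => Real.sq_sqrt (hu0' a)
          rw [this]; exact husum
        have hsX : Real.sqrt (∫ a, Real.sqrt (Uu a) ^ 2 ∂μ) ≤ 1 :=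
          (Real.sqrt_le_sqrt hX2int).trans_eq Real.sqrt_one
        have hsY : Real.sqrt (∫ a, (Real.sqrt (Vv a) - Real.sqrt (Uu a)) ^ 2 ∂μ) ≤ η :=
          (Real.sqrt_le_sqrt hd2').trans_eq (Real.sqrt_sq hη.le)
        refine key.trans ?_
        have h0 : 0 ≤ Real.sqrt (∫ a, Real.sqrt (Uu a) ^ 2 ∂μ)
            + Real.sqrt (∫ a, (Real.sqrt (Vv a) - Real.sqrt (Uu a)) ^ 2 ∂μ) :=
          add_nonneg (Real.sqrt_nonneg _) (Real.sqrt_nonneg _)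
        exact pow_le_pow_left₀ h0 (add_le_add hsX hsY) 2
      · simp only [if_neg h]
        simp only [integral_zero]
        positivity
    · intro k f hfM hbrk a
      have h : ∃ f ∈ M i, ∀ a', lo i k a' ≤ f a' ∧ f a' ≤ up i k a' := ⟨f, hfM, hbrk⟩
      constructor
      · simp only [if_pos h]
        exact (min_le_left _ _).trans (max_le (hbrk a).1 ((hM i f hfM).2.1 a))
      · simp only [if_pos h]
        exact (hbrk a).2.trans (le_max_left _ _)
  choose u v hum hvm hu0 huv hui hvi hd2 hvint hufv using huvex
  -- assemble the bracket cover for the mixture class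
  have hcard : Fintype.card (Fin N₀ × ((i : Fin n) → Fin (N i))) = N₀ * ∏ i, N i := by
    simp
  let e : (Fin N₀ × ((i : Fin n) → Fin (N i))) ≃ Fin (N₀ * ∏ i, N i) :=
    Fintype.equivFinOfCardEq hcard
  refine ⟨N₀ * ∏ i, N i, le_rfl,
    fun m a => ∑ i, A (e.symm m).1 i * u i ((e.symm m).2 i) a,
    fun m a => ∑ i, B (e.symm m).1 i * v i ((e.symm m).2 i) a, ?_, ?_⟩
  · intro m
    refine ⟨Finset.measurable_sum _ fun i _ => (hum i _).const_mul _,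
      Finset.measurable_sum _ fun i _ => (hvm i _).const_mul _,
      integrable_finset_sum _ fun i _ => (hui i _).const_mul _,
      integrable_finset_sum _ fun i _ => (hvi i _).const_mul _, ?_⟩
    exact hell_mix_bound μ hδ.le hη.le (A (e.symm m).1) (B (e.symm m).1)
      (fun i => u i ((e.symm m).2 i)) (fun i => v i ((e.symm m).2 i))
      (hA0 _) (hAB _) (hAsum _) (hABd _) (fun i => hum i _) (fun i => hvm i _)
      (fun i a => hu0 i _ a) (fun i a => huv i _ a) (fun i => hui i _) (fun i => hvi i _)
      (fun i => hd2 i _) (fun i => hvint i _)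
  · rintro s ⟨p, f, hp, hf, hsum⟩
    obtain ⟨j, hj⟩ := hpcov p hp
    choose k hk using fun i => hbcov i (f i) (hf i)
    refine ⟨e (j, k), fun a => ?_⟩
    simp only [Equiv.symm_apply_apply]
    have hABp := hApB j p hp hj
    have huvf := fun i => hufv i (k i) (f i) (hf i) (hk i)
    constructor
    · rw [hsum a]
      exact Finset.sum_le_sum fun i _ =>
        mul_le_mul ((hABp i).1) ((huvf i a).1) (hu0 i (k i) a) (hp.1 i)
    · rw [hsum a]
      exact Finset.sum_le_sum fun i _ =>
        mul_le_mul ((hABp i).2) ((huvf i a).2) ((hM i (f i) (hf i)).2.1 a)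
          ((hA0 j i).trans (hAB j i))

end
end

section
/- Let n ≥ 2 be an integer and identify each element of the simplex 𝕊_{n−1} with a probability density on {1,…,n} with respect to counting measure. Then for every 0 < δ ≤ 1, 𝕊_{n−1} can be covered by a finite family of brackets, each of Hellinger diameter at most δ, whose cardinality N satisfies ln N ≤ (n−1)·ln(1/δ) + (ln 2 + ln(n+1) + n·ln(2πe))/2. -/
open Real BigOperators MeasureTheory

noncomputable section

lemma binom_aux (δ : ℝ) (h0 : 0 ≤ δ) (h1 : δ ≤ 1) :
    ∀ n : ℕ, 1 ≤ n → (1+δ)^n - (1-δ)^n ≤ 2^n * δ ∧ (1+δ)^n + (1-δ)^n ≤ 2^n := by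
  intro n hn
  induction n, hn using Nat.le_induction with
  | base => constructor <;> nlinarith
  | succ n hn ih =>
    obtain ⟨h2, h3⟩ := ih
    have hp : (0:ℝ) < 2^n := by positivity
    have hδ2 : δ * δ ≤ 1 := mul_le_one₀ h1 h0 h1
    constructor
    · have : (1+δ)^(n+1) - (1-δ)^(n+1)
          = ((1+δ)^n - (1-δ)^n) + δ*((1+δ)^n + (1-δ)^n) := by ring
      rw [this, pow_succ]
      nlinarith [mul_le_mul_of_nonneg_left h3 h0]
    · have : (1+δ)^(n+1) + (1-δ)^(n+1)
          = ((1+δ)^n + (1-δ)^n) + δ*((1+δ)^n - (1-δ)^n) := by ring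
      rw [this, pow_succ]
      nlinarith [mul_le_mul_of_nonneg_left h2 h0]

lemma rpow_step (x : ℝ) (hx : 0 < x) :
    ((x+1)/exp 1) ^ (x+1) ≤ (x+1) * (x/exp 1) ^ x := by
  have hx1 : (0:ℝ) < x + 1 := by linarith
  have he : (0:ℝ) < exp 1 := exp_pos 1
  have hb1 : (0:ℝ) < (x+1)/exp 1 := by positivity
  have hb2 : (0:ℝ) < x/exp 1 := by positivity
  have hlog : Real.log (((x+1)/exp 1) ^ (x+1)) ≤ Real.log ((x+1) * (x/exp 1) ^ x) := by
    rw [Real.log_rpow hb1, Real.log_mul (by positivity) (by positivity),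
      Real.log_rpow hb2, Real.log_div (by positivity) (by positivity),
      Real.log_div (by positivity) (by positivity), Real.log_exp]
    have hkey : x * Real.log ((x+1)/x) ≤ 1 := by
      have h' : Real.log ((x+1)/x) ≤ (x+1)/x - 1 :=
        Real.log_le_sub_one_of_pos (by positivity)
      have heq : (x+1)/x - 1 = 1/x := by field_simp; ring
      calc x * Real.log ((x+1)/x) ≤ x * ((x+1)/x - 1) :=
            mul_le_mul_of_nonneg_left h' hx.le
        _ = 1 := by rw [heq]; field_simp
    have hsplit : Real.log (x+1) = Real.log ((x+1)/x) + Real.log x := by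
      rw [Real.log_div (by positivity) (by positivity)]; ring
    nlinarith [hkey, hsplit]
  have h1 : (0:ℝ) < ((x+1)/exp 1) ^ (x+1) := Real.rpow_pos_of_pos hb1 _
  have h2 : (0:ℝ) < (x+1) * (x/exp 1) ^ x :=
    mul_pos hx1 (Real.rpow_pos_of_pos hb2 _)
  exact (Real.log_le_log_iff h1 h2).mp hlog

lemma gamma_base1 : ((1:ℝ)/(2*exp 1)) ^ ((1:ℝ)/2) ≤ Real.Gamma ((1:ℝ)/2 + 1) := by
  have he : (0:ℝ) < exp 1 := exp_pos 1
  have hΓ : Real.Gamma ((1:ℝ)/2 + 1) = Real.sqrt π / 2 := by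
    rw [Real.Gamma_add_one (by norm_num), Real.Gamma_one_half_eq]; ring
  rw [hΓ, show ((1:ℝ)/(2*exp 1)) ^ ((1:ℝ)/2) = Real.sqrt (1/(2*exp 1)) from
    (Real.sqrt_eq_rpow _).symm]
  have h4 : Real.sqrt (1/(2*exp 1)) ≤ Real.sqrt (π/4) := by
    apply Real.sqrt_le_sqrt
    rw [div_le_div_iff₀ (by positivity) (by norm_num)]
    nlinarith [Real.pi_gt_three, Real.exp_one_gt_d9]
  calc Real.sqrt (1/(2*exp 1)) ≤ Real.sqrt (π/4) := h4
    _ = Real.sqrt π / 2 := by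
        rw [Real.sqrt_div Real.pi_pos.le, show Real.sqrt 4 = 2 by
          rw [show (4:ℝ) = 2^2 by norm_num, Real.sqrt_sq (by norm_num : (0:ℝ) ≤ 2)]]

lemma gamma_base2 : ((2:ℝ)/(2*exp 1)) ^ ((2:ℝ)/2) ≤ Real.Gamma ((2:ℝ)/2 + 1) := by
  have he : (0:ℝ) < exp 1 := exp_pos 1
  have : ((2:ℝ)/2 + 1) = 2 := by norm_num
  rw [this, Real.Gamma_two, show ((2:ℝ)/2) = 1 by norm_num, Real.rpow_one]
  rw [div_le_one (by positivity)]
  nlinarith [Real.exp_one_gt_d9]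

lemma gamma_step (n : ℕ) (hn : 1 ≤ n)
    (ih : ((n:ℝ)/(2*exp 1)) ^ ((n:ℝ)/2) ≤ Real.Gamma ((n:ℝ)/2 + 1)) :
    (((n+2:ℕ):ℝ)/(2*exp 1)) ^ (((n+2:ℕ):ℝ)/2) ≤ Real.Gamma (((n+2:ℕ):ℝ)/2 + 1) := by
  have hx : (0:ℝ) < (n:ℝ)/2 := by positivity
  have he : (0:ℝ) < exp 1 := exp_pos 1
  set x : ℝ := (n:ℝ)/2 with hxdef
  have hcast : ((n+2:ℕ):ℝ) = (n:ℝ) + 2 := by push_cast; ring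
  have harg : ((n+2:ℕ):ℝ)/2 = x + 1 := by rw [hcast]; ring
  have hbase : ((n+2:ℕ):ℝ)/(2*exp 1) = (x+1)/exp 1 := by
    rw [hcast]; ring
  have hrec : Real.Gamma (((n+2:ℕ):ℝ)/2 + 1) = (x+1) * Real.Gamma (x + 1) := by
    rw [harg, Real.Gamma_add_one (by positivity : (0:ℝ) < x + 1).ne']
  have hb : ((n:ℝ)/(2*exp 1)) = x / exp 1 := by rw [hxdef]; ring
  rw [hrec, hbase, harg]
  calc ((x+1)/exp 1) ^ (x+1) ≤ (x+1) * (x/exp 1) ^ x := rpow_step x hx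
    _ ≤ (x+1) * Real.Gamma (x+1) := by
        apply mul_le_mul_of_nonneg_left _ (by positivity)
        rw [← hb]; exact ih

lemma gamma_lower : ∀ n : ℕ, 1 ≤ n →
    ((n:ℝ)/(2*exp 1)) ^ ((n:ℝ)/2) ≤ Real.Gamma ((n:ℝ)/2 + 1) := by
  have key : ∀ m : ℕ,
      (((m+1:ℕ):ℝ)/(2*exp 1)) ^ (((m+1:ℕ):ℝ)/2) ≤ Real.Gamma (((m+1:ℕ):ℝ)/2 + 1) := by
    intro m
    induction m using Nat.strong_induction_on with
    | _ m ih =>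
      match m with
      | 0 => simpa using gamma_base1
      | 1 => simpa using gamma_base2
      | (k+2) =>
        have := gamma_step (k+1) (by omega) (by simpa using ih k (by omega))
        simpa [show k+1+2 = k+3 from rfl] using this
  intro n hn
  match n, hn with
  | (m+1), _ => exact key m


def Ivl (m : ℕ) (b : Bool) : Set ℝ :=
  if b then Set.Ioo (m:ℝ) (m+1) else Set.Ioo (-(m:ℝ)-1) (-(m:ℝ))

lemma Ivl_volume (m : ℕ) (b : Bool) : volume (Ivl m b) = 1 := by
  cases b <;> simp [Ivl, Real.volume_Ioo]

lemma Ivl_measurable (m : ℕ) (b : Bool) : MeasurableSet (Ivl m b) := by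
  cases b <;> simp [Ivl]

lemma Ivl_mem_true {m : ℕ} {x : ℝ} (hx : x ∈ Ivl m true) : (m:ℝ) < x ∧ x < (m:ℝ)+1 := by
  simpa [Ivl] using hx

lemma Ivl_mem_false {m : ℕ} {x : ℝ} (hx : x ∈ Ivl m false) : -(m:ℝ)-1 < x ∧ x < -(m:ℝ) := by
  simpa [Ivl] using hx

lemma Ivl_abs {m : ℕ} {b : Bool} {x : ℝ} (hx : x ∈ Ivl m b) :
    (m:ℝ) ≤ |x| ∧ |x| ≤ (m:ℝ)+1 := by
  have h0 : (0:ℝ) ≤ (m:ℝ) := Nat.cast_nonneg m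
  cases b
  · obtain ⟨h1, h2⟩ := Ivl_mem_false hx
    rw [abs_of_neg (by linarith : x < 0)]
    constructor <;> linarith
  · obtain ⟨h1, h2⟩ := Ivl_mem_true hx
    rw [abs_of_pos (by linarith : (0:ℝ) < x)]
    constructor <;> linarith

lemma Ivl_disjoint {m m' : ℕ} {b b' : Bool} (h : m ≠ m' ∨ b ≠ b') :
    Disjoint (Ivl m b) (Ivl m' b') := by
  rw [Set.disjoint_left]
  intro x hx hx'
  have h0 : (0:ℝ) ≤ (m:ℝ) := Nat.cast_nonneg m
  have h0' : (0:ℝ) ≤ (m':ℝ) := Nat.cast_nonneg m'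
  cases b <;> cases b'
  · obtain ⟨a1, a2⟩ := Ivl_mem_false hx
    obtain ⟨c1, c2⟩ := Ivl_mem_false hx'
    have hm : m ≠ m' := by tauto
    rcases Nat.lt_or_ge m m' with h1 | h1
    · have hle : (m:ℝ) + 1 ≤ (m':ℝ) := by exact_mod_cast Nat.succ_le_of_lt h1
      linarith
    · have h1' : m' < m := by omega
      have hle : (m':ℝ) + 1 ≤ (m:ℝ) := by exact_mod_cast Nat.succ_le_of_lt h1'
      linarith
  · obtain ⟨a1, a2⟩ := Ivl_mem_false hx
    obtain ⟨c1, c2⟩ := Ivl_mem_true hx'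
    linarith
  · obtain ⟨a1, a2⟩ := Ivl_mem_true hx
    obtain ⟨c1, c2⟩ := Ivl_mem_false hx'
    linarith
  · obtain ⟨a1, a2⟩ := Ivl_mem_true hx
    obtain ⟨c1, c2⟩ := Ivl_mem_true hx'
    have hm : m ≠ m' := by tauto
    rcases Nat.lt_or_ge m m' with h1 | h1
    · have hle : (m:ℝ) + 1 ≤ (m':ℝ) := by exact_mod_cast Nat.succ_le_of_lt h1
      linarith
    · have h1' : m' < m := by omega
      have hle : (m':ℝ) + 1 ≤ (m:ℝ) := by exact_mod_cast Nat.succ_le_of_lt h1'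
      linarith

lemma count_le (n K : ℕ) (hn : 1 ≤ n) (M : ℝ) (hM : Real.sqrt n ≤ M)
    (F : Finset (Fin n → Fin (K+1)))
    (hF : ∀ k ∈ F, (∑ i, (((k i : ℕ)):ℝ)^2) ≤ M^2 ∧ M^2 ≤ ∑ i, ((((k i : ℕ)):ℝ)+1)^2) :
    (F.card : ℝ) * 2^n ≤ ((M + Real.sqrt n)^n - (M - Real.sqrt n)^n)
      * (Real.sqrt π ^ n / Real.Gamma (n/2 + 1)) := by
  classical
  haveI : Nonempty (Fin n) := ⟨⟨0, hn⟩⟩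
  set E := EuclideanSpace ℝ (Fin n)
  set e := (MeasurableEquiv.toLp 2 (Fin n → ℝ)).symm with he
  set sn := Real.sqrt n with hsn
  have hsn0 : 0 ≤ sn := Real.sqrt_nonneg _
  have hM0 : 0 ≤ M := le_trans hsn0 hM
  -- boxes
  set Box : (Fin n → Fin (K+1)) × (Fin n → Bool) → Set E :=
    fun kb => e ⁻¹' (Set.univ.pi fun i => Ivl (kb.1 i) (kb.2 i)) with hBox
  have hmem : ∀ kb (x : E), x ∈ Box kb ↔ ∀ i, x i ∈ Ivl (kb.1 i) (kb.2 i) := by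
    intro kb x
    simp [hBox, Set.mem_pi, MeasurableEquiv.coe_toLp_symm]
    rfl
  have hBoxMeas : ∀ kb, MeasurableSet (Box kb) := by
    intro kb
    exact e.measurable (MeasurableSet.univ_pi fun i => Ivl_measurable _ _)
  have hBoxVol : ∀ kb, volume (Box kb) = 1 := by
    intro kb
    rw [hBox]
    rw [(EuclideanSpace.volume_preserving_symm_measurableEquiv_toLp (Fin n)).measure_preimage
      ((MeasurableSet.univ_pi fun i => Ivl_measurable _ _).nullMeasurableSet)]
    rw [volume_pi_pi]
    simp [Ivl_volume]
  -- index set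
  set G : Finset ((Fin n → Fin (K+1)) × (Fin n → Bool)) := F ×ˢ Finset.univ with hG
  have hGcard : G.card = F.card * 2^n := by
    rw [hG, Finset.card_product, Finset.card_univ]
    congr 1
    simp [Fintype.card_fun]
  -- pairwise disjoint
  have hdisj : (G : Set ((Fin n → Fin (K+1)) × (Fin n → Bool))).PairwiseDisjoint Box := by
    intro kb _ kb' _ hne
    have : ∃ i, (kb.1 i : ℕ) ≠ (kb'.1 i : ℕ) ∨ kb.2 i ≠ kb'.2 i := by
      by_contra hcon
      push_neg at hcon
      apply hne
      have h1 : kb.1 = kb'.1 := funext fun i => Fin.ext (hcon i).1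
      have h2 : kb.2 = kb'.2 := funext fun i => (hcon i).2
      exact Prod.ext h1 h2
    obtain ⟨i, hi⟩ := this
    apply Set.disjoint_left.mpr
    intro x hx hx'
    exact Set.disjoint_left.mp (Ivl_disjoint hi) ((hmem _ x).mp hx i) ((hmem _ x).mp hx' i)
  -- boxes inside the annulus
  set R₂ := M + sn with hR₂
  set R₁ := M - sn with hR₁
  set ann : Set E := Metric.closedBall 0 R₂ \ Metric.ball 0 R₁ with hann
  have hsub : ∀ kb ∈ G, Box kb ⊆ ann := by
    intro kb hkb x hx
    have hk : kb.1 ∈ F := (Finset.mem_product.mp hkb).1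
    obtain ⟨hk1, hk2⟩ := hF kb.1 hk
    have habs : ∀ i, ((kb.1 i : ℕ):ℝ) ≤ |x i| ∧ |x i| ≤ ((kb.1 i : ℕ):ℝ) + 1 :=
      fun i => Ivl_abs ((hmem _ x).mp hx i)
    -- vectors u (= k) and u+1
    set u : E := WithLp.toLp 2 (fun i => ((kb.1 i : ℕ):ℝ)) with hu
    set w : E := WithLp.toLp 2 (fun i => ((kb.1 i : ℕ):ℝ) + 1) with hw
    have hnormu : ‖u‖ = Real.sqrt (∑ i, ((kb.1 i : ℕ):ℝ)^2) := by
      rw [EuclideanSpace.norm_eq]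
      congr 1
      refine Finset.sum_congr rfl fun i _ => ?_
      rw [Real.norm_eq_abs, sq_abs]
    have hnormw : ‖w‖ = Real.sqrt (∑ i, (((kb.1 i : ℕ):ℝ)+1)^2) := by
      rw [EuclideanSpace.norm_eq]
      congr 1
      refine Finset.sum_congr rfl fun i _ => ?_
      rw [Real.norm_eq_abs, sq_abs]
    have hnormx : ‖x‖ = Real.sqrt (∑ i, (x i)^2) := by
      rw [EuclideanSpace.norm_eq]
      congr 1
      refine Finset.sum_congr rfl fun i _ => ?_
      rw [Real.norm_eq_abs, sq_abs]
    set v : E := WithLp.toLp 2 (fun _ => (1:ℝ)) with hv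
    have huw : w = u + v := by
      ext i
      have : (u + v) i = u i + v i := rfl
      rw [this, hw, hu, hv]
    have hnorm1 : ‖v‖ = sn := by
      rw [EuclideanSpace.norm_eq]
      simp [hv, hsn]
    have hu_le : ‖u‖ ≤ M := by
      rw [hnormu]
      calc Real.sqrt (∑ i, ((kb.1 i : ℕ):ℝ)^2) ≤ Real.sqrt (M^2) := Real.sqrt_le_sqrt hk1
        _ = M := Real.sqrt_sq hM0
    have hw_ge : M ≤ ‖w‖ := by
      rw [hnormw]
      calc M = Real.sqrt (M^2) := (Real.sqrt_sq hM0).symm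
        _ ≤ _ := Real.sqrt_le_sqrt hk2
    have hx_le_w : ‖x‖ ≤ ‖w‖ := by
      rw [hnormx, hnormw]
      apply Real.sqrt_le_sqrt
      apply Finset.sum_le_sum
      intro i _
      have := (habs i).2
      calc (x i)^2 = |x i|^2 := (sq_abs _).symm
        _ ≤ (((kb.1 i : ℕ):ℝ)+1)^2 := pow_le_pow_left₀ (abs_nonneg _) this 2
    have hu_le_x : ‖u‖ ≤ ‖x‖ := by
      rw [hnormx, hnormu]
      apply Real.sqrt_le_sqrt
      apply Finset.sum_le_sum
      intro i _
      have := (habs i).1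
      calc ((kb.1 i : ℕ):ℝ)^2 ≤ |x i|^2 := pow_le_pow_left₀ (Nat.cast_nonneg _) this 2
        _ = (x i)^2 := sq_abs _
    have htri : ‖w‖ ≤ ‖u‖ + sn := by
      rw [huw, ← hnorm1]
      exact norm_add_le u v
    constructor
    · -- in closed ball
      rw [Metric.mem_closedBall, dist_zero_right]
      calc ‖x‖ ≤ ‖w‖ := hx_le_w
        _ ≤ ‖u‖ + sn := htri
        _ ≤ M + sn := by linarith
    · -- not in ball
      rw [Metric.mem_ball, dist_zero_right, not_lt]
      have : M - sn ≤ ‖u‖ := by linarith [hw_ge, htri]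
      linarith [hu_le_x]
  -- counting via volume
  have hcount : (G.card : ENNReal) ≤ volume ann := by
    calc (G.card : ENNReal) = ∑ kb ∈ G, volume (Box kb) := by
          simp [hBoxVol]
      _ = volume (⋃ kb ∈ G, Box kb) :=
          (measure_biUnion_finset hdisj (fun kb _ => hBoxMeas kb)).symm
      _ ≤ volume ann := measure_mono (Set.iUnion₂_subset hsub)
  have hΓpos : 0 < Real.Gamma ((n:ℝ)/2 + 1) := Real.Gamma_pos_of_pos (by positivity)
  set c : ℝ := Real.sqrt π ^ n / Real.Gamma ((n:ℝ)/2 + 1) with hc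
  have hc0 : 0 ≤ c := by positivity
  have hR₂0 : 0 ≤ R₂ := by rw [hR₂]; linarith
  have hR₁0 : 0 ≤ R₁ := by rw [hR₁]; linarith
  have hR₁₂ : R₁ ≤ R₂ := by rw [hR₁, hR₂]; linarith
  have hvol_cb : volume (Metric.closedBall (0:E) R₂) = ENNReal.ofReal (R₂^n * c) := by
    rw [show (Metric.closedBall (0:E) R₂) = Metric.closedBall (0 : EuclideanSpace ℝ (Fin n)) R₂ from rfl,
      EuclideanSpace.volume_closedBall]
    simp only [Fintype.card_fin]
    rw [← ENNReal.ofReal_pow hR₂0, ← ENNReal.ofReal_mul (by positivity)]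
  have hvol_b : volume (Metric.ball (0:E) R₁) = ENNReal.ofReal (R₁^n * c) := by
    rw [show (Metric.ball (0:E) R₁) = Metric.ball (0 : EuclideanSpace ℝ (Fin n)) R₁ from rfl,
      EuclideanSpace.volume_ball]
    simp only [Fintype.card_fin]
    rw [← ENNReal.ofReal_pow hR₁0, ← ENNReal.ofReal_mul (by positivity)]
  have hball_sub : Metric.ball (0:E) R₁ ⊆ Metric.closedBall 0 R₂ :=
    Metric.ball_subset_closedBall.trans (Metric.closedBall_subset_closedBall hR₁₂)
  have hann_vol : volume ann = ENNReal.ofReal (R₂^n * c - R₁^n * c) := by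
    rw [hann, measure_diff hball_sub Metric.isOpen_ball.measurableSet.nullMeasurableSet
      (by rw [hvol_b]; exact ENNReal.ofReal_ne_top), hvol_cb, hvol_b,
      ENNReal.ofReal_sub _ (by positivity)]
  have hRn : R₁^n * c ≤ R₂^n * c :=
    mul_le_mul_of_nonneg_right (pow_le_pow_left₀ hR₁0 hR₁₂ n) hc0
  have hfinal : (G.card : ℝ) ≤ R₂^n * c - R₁^n * c := by
    have h1 := hcount
    rw [hann_vol, ← ENNReal.ofReal_natCast G.card] at h1
    exact (ENNReal.ofReal_le_ofReal_iff (by linarith)).mp h1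
  have hGcast : (G.card : ℝ) = (F.card : ℝ) * 2^n := by
    rw [hGcard]; push_cast; ring
  rw [← hGcast]
  calc (G.card : ℝ) ≤ R₂^n * c - R₁^n * c := hfinal
    _ = (R₂^n - R₁^n) * c := by ring


/-- **Lemma 4: bracketing entropy of the simplex.**
For `0 < δ ≤ 1` the simplex `𝕊_{n-1}` is covered by `N` brackets of
Hellinger diameter at most `δ` with
`ln N ≤ (n-1) ln(1/δ) + (ln 2 + ln(n+1) + n ln(2πe))/2`. -/
theorem bracketing_entropy_simplex (n : ℕ) (hn : 2 ≤ n)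
    (δ : ℝ) (hδ0 : 0 < δ) (hδ1 : δ ≤ 1) :
    ∃ (N : ℕ) (lo up : Fin N → Fin n → ℝ),
      (∀ j, hellF (lo j) (up j) ≤ δ) ∧
      (∀ p ∈ stdSimplex ℝ (Fin n), ∃ j, ∀ i, lo j i ≤ p i ∧ p i ≤ up j i) ∧
      Real.log N ≤ ((n : ℝ) - 1) * Real.log (1 / δ)
        + (Real.log 2 + Real.log ((n : ℝ) + 1)
            + (n : ℝ) * Real.log (2 * Real.pi * Real.exp 1)) / 2 := by
  classical
  have hn1 : 1 ≤ n := by omega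
  have hnR : (0:ℝ) < n := by exact_mod_cast Nat.pos_of_ne_zero (by omega)
  have hsn0 : (0:ℝ) < Real.sqrt n := Real.sqrt_pos.mpr hnR
  set M : ℝ := Real.sqrt n / δ with hMdef
  have hM0 : 0 < M := by positivity
  set ε : ℝ := δ / Real.sqrt n with hεdef
  have hε0 : 0 < ε := by positivity
  have hMε : M * ε = 1 := by
    rw [hMdef, hεdef]; field_simp
  have hMsn : Real.sqrt n ≤ M := by
    rw [hMdef, le_div_iff₀ hδ0]
    nlinarith [hsn0]
  set K : ℕ := ⌈M⌉₊ with hK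
  set F : Finset (Fin n → Fin (K+1)) := Finset.univ.filter
    (fun k => (∑ i, (((k i : ℕ)):ℝ)^2) ≤ M^2 ∧ M^2 ≤ ∑ i, ((((k i : ℕ)):ℝ)+1)^2) with hFdef
  set N := F.card with hN
  set key : Fin N → (Fin n → ℕ) := fun j i => ((F.equivFin.symm j : Fin n → Fin (K+1)) i : ℕ)
    with hkey
  refine ⟨N, fun j i => ((key j i : ℝ) * ε)^2, fun j i => (((key j i : ℝ)+1) * ε)^2,
    ?_, ?_, ?_⟩
  · -- diameters
    intro j
    unfold hellF
    have hterm : ∀ i : Fin n,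
        (Real.sqrt (((key j i : ℝ) * ε)^2) - Real.sqrt ((((key j i : ℝ)+1) * ε)^2))^2
          = ε^2 := by
      intro i
      rw [Real.sqrt_sq (by positivity), Real.sqrt_sq (by positivity)]
      ring
    rw [Finset.sum_congr rfl (fun i _ => hterm i), Finset.sum_const, Finset.card_univ,
      Fintype.card_fin, nsmul_eq_mul]
    have : Real.sqrt ((n:ℝ) * ε^2) = Real.sqrt n * ε := by
      rw [Real.sqrt_mul (le_of_lt hnR), Real.sqrt_sq hε0.le]
    rw [this, hεdef]
    rw [mul_div_cancel₀ _ (ne_of_gt hsn0)]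
  · -- covering
    rintro p ⟨hp0, hp1⟩
    have hple : ∀ i, p i ≤ 1 := by
      intro i
      rw [← hp1]
      exact Finset.single_le_sum (fun j _ => hp0 j) (Finset.mem_univ i)
    have hfl : ∀ i, (⌊Real.sqrt (p i) * M⌋₊ : ℕ) < K + 1 := by
      intro i
      have h1 : Real.sqrt (p i) * M ≤ M := by
        nlinarith [Real.sqrt_le_one.mpr (hple i), Real.sqrt_nonneg (p i), hM0]
      have : ⌊Real.sqrt (p i) * M⌋₊ ≤ ⌊M⌋₊ := Nat.floor_le_floor h1
      have h2 : ⌊M⌋₊ ≤ K := by rw [hK]; exact Nat.floor_le_ceil M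
      omega
    set k : Fin n → Fin (K+1) := fun i => ⟨⌊Real.sqrt (p i) * M⌋₊, hfl i⟩ with hkdef
    have hlow : ∀ i, ((k i : ℕ):ℝ) ≤ Real.sqrt (p i) * M := by
      intro i
      exact Nat.floor_le (by positivity)
    have hhigh : ∀ i, Real.sqrt (p i) * M < ((k i : ℕ):ℝ) + 1 := by
      intro i
      exact Nat.lt_floor_add_one _
    have hsq : ∀ i, Real.sqrt (p i) ^ 2 = p i := fun i => Real.sq_sqrt (hp0 i)
    have hlowsq : ∀ i, ((k i : ℕ):ℝ)^2 ≤ p i * M^2 := by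
      intro i
      have := hlow i
      calc ((k i : ℕ):ℝ)^2 ≤ (Real.sqrt (p i) * M)^2 :=
            pow_le_pow_left₀ (Nat.cast_nonneg _) this 2
        _ = p i * M^2 := by rw [mul_pow, hsq i]
    have hhighsq : ∀ i, p i * M^2 ≤ (((k i : ℕ):ℝ)+1)^2 := by
      intro i
      have h := (hhigh i).le
      calc p i * M^2 = (Real.sqrt (p i) * M)^2 := by rw [mul_pow, hsq i]
        _ ≤ (((k i : ℕ):ℝ)+1)^2 := pow_le_pow_left₀ (by positivity) h 2
    have hkF : k ∈ F := by
      rw [hFdef, Finset.mem_filter]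
      refine ⟨Finset.mem_univ _, ?_, ?_⟩
      · calc ∑ i, ((k i : ℕ):ℝ)^2 ≤ ∑ i, p i * M^2 := Finset.sum_le_sum fun i _ => hlowsq i
          _ = M^2 := by rw [← Finset.sum_mul, hp1, one_mul]
      · calc M^2 = ∑ i, p i * M^2 := by rw [← Finset.sum_mul, hp1, one_mul]
          _ ≤ _ := Finset.sum_le_sum fun i _ => hhighsq i
    refine ⟨F.equivFin ⟨k, hkF⟩, fun i => ?_⟩
    have hkeyval : key (F.equivFin ⟨k, hkF⟩) i = (k i : ℕ) := by
      rw [hkey]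
      simp only [Equiv.symm_apply_apply]
    dsimp only
    rw [hkeyval]
    constructor
    · have h1 : ((k i : ℕ):ℝ) * ε ≤ Real.sqrt (p i) := by
        have := mul_le_mul_of_nonneg_right (hlow i) hε0.le
        calc ((k i : ℕ):ℝ) * ε ≤ Real.sqrt (p i) * M * ε := this
          _ = Real.sqrt (p i) := by rw [mul_assoc, hMε, mul_one]
      calc (((k i : ℕ):ℝ) * ε)^2 ≤ Real.sqrt (p i)^2 :=
            pow_le_pow_left₀ (by positivity) h1 2
        _ = p i := hsq i
    · have h2 : Real.sqrt (p i) ≤ (((k i : ℕ):ℝ)+1) * ε := by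
        have := mul_le_mul_of_nonneg_right (hhigh i).le hε0.le
        calc Real.sqrt (p i) = Real.sqrt (p i) * M * ε := by rw [mul_assoc, hMε, mul_one]
          _ ≤ (((k i : ℕ):ℝ)+1) * ε := this
      calc p i = Real.sqrt (p i)^2 := (hsq i).symm
        _ ≤ ((((k i : ℕ):ℝ)+1) * ε)^2 := pow_le_pow_left₀ (Real.sqrt_nonneg _) h2 2
  · -- cardinality bound
    have hFmem : ∀ k ∈ F, (∑ i, (((k i : ℕ)):ℝ)^2) ≤ M^2 ∧ M^2 ≤ ∑ i, ((((k i : ℕ)):ℝ)+1)^2 := by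
      intro k hk
      rw [hFdef, Finset.mem_filter] at hk
      exact hk.2
    have hcard := count_le n K hn1 M hMsn F hFmem
    rw [← hN] at hcard
    have hΓpos : 0 < Real.Gamma ((n:ℝ)/2 + 1) := Real.Gamma_pos_of_pos (by positivity)
    set s : ℝ := Real.sqrt (2 * π * exp 1) with hs
    have hs0 : 0 < s := Real.sqrt_pos.mpr (by positivity)
    set q : ℝ := Real.sqrt ((n:ℝ)/(2*exp 1)) with hq
    have hq0 : 0 < q := Real.sqrt_pos.mpr (by positivity)
    have hprod : q * s = Real.sqrt n * Real.sqrt π := by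
      rw [hq, hs, ← Real.sqrt_mul (by positivity), ← Real.sqrt_mul (le_of_lt hnR)]
      congr 1
      have he0 : Real.exp 1 ≠ 0 := (Real.exp_pos 1).ne'
      field_simp
    have hΓlow : q^n ≤ Real.Gamma ((n:ℝ)/2 + 1) := by
      have h := gamma_lower n hn1
      have heq : ((n:ℝ)/(2*exp 1)) ^ ((n:ℝ)/2) = q^n := by
        rw [hq, Real.sqrt_eq_rpow, ← Real.rpow_natCast (((n:ℝ)/(2*exp 1)) ^ (1/(2:ℝ))) n,
          ← Real.rpow_mul (by positivity)]
        congr 1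
        ring
      rwa [heq] at h
    have hdiff : (M + Real.sqrt n)^n - (M - Real.sqrt n)^n
        ≤ (Real.sqrt n / δ)^n * (2^n * δ) := by
      have e2 : M + Real.sqrt n = (Real.sqrt n / δ) * (1 + δ) := by
        rw [hMdef]; field_simp
      have e1 : M - Real.sqrt n = (Real.sqrt n / δ) * (1 - δ) := by
        rw [hMdef]; field_simp
      rw [e1, e2, mul_pow, mul_pow, ← mul_sub]
      exact mul_le_mul_of_nonneg_left (binom_aux δ hδ0.le hδ1 n hn1).1 (by positivity)
    have hc_le : Real.sqrt π ^ n / Real.Gamma ((n:ℝ)/2 + 1) ≤ Real.sqrt π ^ n / q^n := by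
      gcongr
    have hmain : (N:ℝ) * 2^n ≤ (Real.sqrt n / δ)^n * (2^n * δ) * (Real.sqrt π ^ n / q^n) := by
      calc (N:ℝ) * 2^n ≤ ((M + Real.sqrt n)^n - (M - Real.sqrt n)^n)
            * (Real.sqrt π ^ n / Real.Gamma ((n:ℝ)/2 + 1)) := hcard
        _ ≤ ((Real.sqrt n / δ)^n * (2^n * δ))
            * (Real.sqrt π ^ n / Real.Gamma ((n:ℝ)/2 + 1)) :=
            mul_le_mul_of_nonneg_right hdiff (by positivity)
        _ ≤ _ := mul_le_mul_of_nonneg_left hc_le (by positivity)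
    have hqs2 : Real.sqrt n * Real.sqrt π / q = s := by
      rw [div_eq_iff hq0.ne', ← hprod]; ring
    have key2 : (Real.sqrt n)^n * (Real.sqrt π)^n / q^n = s^n := by
      rw [← mul_pow, ← div_pow, hqs2]
    have hδkey : δ * (1/δ)^n = (1/δ)^(n-1) := by
      have hsplit : (1/δ)^n = (1/δ)^(n-1) * (1/δ) := by
        rw [← pow_succ, Nat.sub_add_cancel hn1]
      rw [hsplit, ← mul_assoc, mul_comm δ _, mul_assoc, one_div,
        mul_inv_cancel₀ hδ0.ne', mul_one]
    have hsimp : (Real.sqrt n / δ)^n * (2^n * δ) * (Real.sqrt π ^ n / q^n)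
        = 2^n * (s^n * (1/δ)^(n-1)) := by
      calc (Real.sqrt n / δ)^n * (2^n * δ) * (Real.sqrt π ^ n / q^n)
          = 2^n * (((Real.sqrt n)^n * (Real.sqrt π)^n / q^n) * (δ * (1/δ)^n)) := by
            rw [div_eq_mul_one_div (Real.sqrt n) δ, mul_pow]
            ring
        _ = 2^n * (s^n * (1/δ)^(n-1)) := by rw [key2, hδkey]
    rw [hsimp] at hmain
    have h2n : (0:ℝ) < 2^n := by positivity
    have hfinalN : (N:ℝ) ≤ s^n * (1/δ)^(n-1) := by
      rw [mul_comm ((2:ℝ)^n) _] at hmain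
      exact le_of_mul_le_mul_right hmain h2n
    -- logs
    have hδinv : (1:ℝ) ≤ 1/δ := by
      rw [le_div_iff₀ hδ0]; linarith
    have l1 : 0 ≤ Real.log (1/δ) := Real.log_nonneg hδinv
    have l2 : 0 ≤ Real.log 2 := Real.log_nonneg one_le_two
    have l3 : 0 ≤ Real.log ((n:ℝ)+1) := Real.log_nonneg (by linarith)
    have hpe : (1:ℝ) ≤ 2 * π * exp 1 := by
      nlinarith [Real.pi_gt_three, Real.exp_one_gt_d9]
    have l4 : 0 ≤ Real.log (2 * π * exp 1) := Real.log_nonneg hpe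
    have hn2R : (2:ℝ) ≤ (n:ℝ) := by exact_mod_cast hn
    rcases Nat.eq_zero_or_pos N with hN0 | hNpos
    · rw [hN0]
      rw [Nat.cast_zero, Real.log_zero]
      have t1 : 0 ≤ ((n:ℝ) - 1) * Real.log (1/δ) := mul_nonneg (by linarith) l1
      have t2 : 0 ≤ (n:ℝ) * Real.log (2 * π * exp 1) := mul_nonneg (by linarith) l4
      linarith
    · have hNposR : (0:ℝ) < N := by exact_mod_cast hNpos
      have hlog : Real.log N ≤ Real.log (s^n * (1/δ)^(n-1)) :=
        Real.log_le_log hNposR hfinalN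
      rw [Real.log_mul (by positivity) (by positivity), Real.log_pow, Real.log_pow] at hlog
      have hlogs : Real.log s = Real.log (2 * π * exp 1) / 2 := by
        rw [hs, Real.log_sqrt (by positivity)]
      rw [hlogs] at hlog
      have hcast : ((n-1 : ℕ):ℝ) = (n:ℝ) - 1 := by
        rw [Nat.cast_sub hn1, Nat.cast_one]
      rw [hcast] at hlog
      calc Real.log N ≤ (n:ℝ) * (Real.log (2 * π * exp 1) / 2)
            + ((n:ℝ) - 1) * Real.log (1/δ) := hlog
        _ ≤ ((n : ℝ) - 1) * Real.log (1 / δ)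
            + (Real.log 2 + Real.log ((n : ℝ) + 1)
              + (n : ℝ) * Real.log (2 * Real.pi * Real.exp 1)) / 2 := by linarith

end
end

section
/- Let A ≥ 2 and δ > 0. If l, u ∈ [0,∞)^A and α ∈ 𝕊_{A−1} satisfy l ≤ α ≤ u componentwise and (∑_{a=1}^A (√u_a − √l_a)²)^{1/2} ≤ δ, then d_l ≤ d_α ≤ d_u pointwise and the Hellinger distance (with respect to counting measure on the set of unordered pairs) satisfies h(d_l, d_u) ≤ √2·δ·(2+δ). Consequently, if 𝕊_{A−1} is covered by a finite family of N brackets each of Hellinger diameter at most δ, then the set Ω = { d_α : α ∈ 𝕊_{A−1} } of Hardy–Weinberg genotype distributions is covered by a finite family of at most N brackets each of Hellinger diameter at most √2·δ·(2+δ). -/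
open Real BigOperators

noncomputable section

/-- Auxiliary symmetric function for the Hardy-Weinberg distribution. -/
def hwAux {A : ℕ} (β : Fin A → ℝ) (a b : Fin A) : ℝ :=
  (2 - if a = b then 1 else 0) * β a * β b

lemma hwAux_symm {A : ℕ} (β : Fin A → ℝ) (a b : Fin A) : hwAux β a b = hwAux β b a := by
  unfold hwAux
  rcases eq_or_ne a b with h | h
  · subst h; ring
  · rw [if_neg h, if_neg h.symm]; ring

/-- The Hardy-Weinberg function `d_β` on unordered pairs,
`d_β({x¹, x²}) = (2 - 1_{x¹=x²}) β_{x¹} β_{x²}`. -/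
def hw {A : ℕ} (β : Fin A → ℝ) : Sym2 (Fin A) → ℝ :=
  Sym2.lift ⟨hwAux β, hwAux_symm β⟩

lemma hw_apply {A : ℕ} (β : Fin A → ℝ) (a b : Fin A) :
    hw β s(a, b) = (2 - if a = b then 1 else 0) * β a * β b := rfl

lemma sym2_sum_eq {A : ℕ} (g : Sym2 (Fin A) → ℝ) (F : Fin A → Fin A → ℝ)
    (hdiag : ∀ a, g s(a, a) = F a a)
    (hoff : ∀ a b, a ≠ b → g s(a, b) = 2 * F a b)
    (hsymm : ∀ a b, F a b = F b a) :
    ∑ z : Sym2 (Fin A), g z = ∑ a, ∑ b, F a b := by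
  have h0 := Finset.sum_sym2_filter_not_isDiag (Finset.univ : Finset (Fin A)) g
  have hRHS : ∑ a, ∑ b, F a b = ∑ p ∈ Finset.univ ×ˢ Finset.univ, F p.1 p.2 := by
    rw [Finset.sum_product]
  rw [hRHS, ← Finset.diag_union_offDiag, Finset.sum_union (Finset.disjoint_diag_offDiag _)]
  have huniv : (Finset.univ : Finset (Sym2 (Fin A))) = (Finset.univ : Finset (Fin A)).sym2 :=
    (Finset.sym2_univ _).symm
  rw [huniv, ← Finset.sum_filter_add_sum_filter_not ((Finset.univ : Finset (Fin A)).sym2)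
    Sym2.IsDiag g]
  congr 1
  · -- diagonal part
    have himg : ((Finset.univ : Finset (Fin A)).sym2).filter Sym2.IsDiag
        = Finset.image Sym2.diag Finset.univ := by
      ext z
      simp [Set.mem_range, eq_comm]
      exact ⟨fun h => ⟨_, (Sym2.diag_diagElem h).symm⟩, by rintro ⟨a, rfl⟩; exact Sym2.diag_isDiag a⟩
    rw [himg, Finset.sum_image (fun a _ b _ h => Sym2.diag_injective h), Finset.sum_diag]
    exact Finset.sum_congr rfl fun a _ => hdiag a
  · -- off-diagonal part
    have h0' : ∑ x ∈ Finset.univ.sym2.filter (fun x => ¬x.IsDiag), g x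
        = ∑ i ∈ Finset.filter (fun i => i.1 < i.2) Finset.univ.offDiag, g s(i.1, i.2) := by
      convert h0 using 2 <;> congr!
    refine Eq.trans h0' ?_
    have h1 : ∑ p ∈ (Finset.univ : Finset (Fin A)).offDiag with p.1 < p.2, g s(p.1, p.2)
        = ∑ p ∈ (Finset.univ : Finset (Fin A)).offDiag with p.1 < p.2, 2 * F p.1 p.2 := by
      refine Finset.sum_congr rfl fun p hp => ?_
      simp only [Finset.mem_filter, Finset.mem_offDiag] at hp
      exact hoff _ _ (ne_of_lt hp.2)
    rw [h1]
    rw [← Finset.sum_filter_add_sum_filter_not ((Finset.univ : Finset (Fin A)).offDiag)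
      (fun p => p.1 < p.2) (fun p => F p.1 p.2)]
    have h2 : ∑ p ∈ (Finset.univ : Finset (Fin A)).offDiag with ¬ p.1 < p.2, F p.1 p.2
        = ∑ p ∈ (Finset.univ : Finset (Fin A)).offDiag with p.1 < p.2, F p.1 p.2 := by
      refine Finset.sum_nbij' Prod.swap Prod.swap ?_ ?_ ?_ ?_ ?_
      · rintro ⟨a, b⟩ hp
        simp only [Finset.mem_filter, Finset.mem_offDiag, Finset.mem_univ, true_and] at hp ⊢
        obtain ⟨hab, h2⟩ := hp
        exact ⟨Ne.symm hab, lt_of_le_of_ne (not_lt.mp h2) (Ne.symm hab)⟩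
      · rintro ⟨a, b⟩ hp
        simp only [Finset.mem_filter, Finset.mem_offDiag, Finset.mem_univ, true_and] at hp ⊢
        obtain ⟨hab, h2⟩ := hp
        exact ⟨Ne.symm hab, not_lt.mpr (le_of_lt h2)⟩
      · rintro ⟨a, b⟩ _; rfl
      · rintro ⟨a, b⟩ _; rfl
      · rintro ⟨a, b⟩ _; exact hsymm a b
    rw [h2]
    have hss : ∀ (s t : Finset (Fin A × Fin A)), s = t →
        ∑ p ∈ s, 2 * F p.1 p.2 = ∑ p ∈ t, F p.1 p.2 + ∑ p ∈ t, F p.1 p.2 := by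
      rintro s t rfl
      rw [← Finset.sum_add_distrib]
      exact Finset.sum_congr rfl fun p _ => by ring
    exact hss _ _ (by congr)



lemma hw_mono {A : ℕ} {β γ : Fin A → ℝ} (hβ : ∀ a, 0 ≤ β a) (h : ∀ a, β a ≤ γ a) :
    ∀ x, hw β x ≤ hw γ x := by
  intro x
  induction x using Sym2.ind with
  | _ a b =>
    rw [hw_apply, hw_apply]
    have hc : (0:ℝ) ≤ 2 - if a = b then 1 else 0 := by split <;> norm_num
    have h1 : (2 - if a = b then 1 else 0) * β a ≤ (2 - if a = b then 1 else 0) * γ a :=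
      mul_le_mul_of_nonneg_left (h a) hc
    exact mul_le_mul h1 (h b) (hβ b) (mul_nonneg hc ((hβ a).trans (h a)))

lemma main1 {A : ℕ} (δ : ℝ) (hδ : 0 < δ) (l u α : Fin A → ℝ)
    (hl : ∀ a, 0 ≤ l a) (hu : ∀ a, 0 ≤ u a) (hα : α ∈ stdSimplex ℝ (Fin A))
    (hlα : ∀ a, l a ≤ α a) (hαu : ∀ a, α a ≤ u a)
    (hδ' : Real.sqrt (∑ a, (Real.sqrt (u a) - Real.sqrt (l a)) ^ 2) ≤ δ) :
    (∀ x, hw l x ≤ hw α x ∧ hw α x ≤ hw u x) ∧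
      hellF (hw l) (hw u) ≤ Real.sqrt 2 * δ * (2 + δ) := by
  obtain ⟨hα0, hα1⟩ := hα
  have hα0' : ∀ a, 0 ≤ α a := fun a => hα0 a
  constructor
  · intro x
    exact ⟨hw_mono hl hlα x, hw_mono hα0' hαu x⟩
  -- notation
  set s : Fin A → ℝ := fun a => Real.sqrt (u a) with hs_def
  set t : Fin A → ℝ := fun a => Real.sqrt (l a) with ht_def
  have hs0 : ∀ a, 0 ≤ s a := fun a => Real.sqrt_nonneg _
  have ht0 : ∀ a, 0 ≤ t a := fun a => Real.sqrt_nonneg _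
  have hts : ∀ a, t a ≤ s a := fun a => Real.sqrt_le_sqrt ((hlα a).trans (hαu a))
  set E : ℝ := ∑ a, (s a - t a) ^ 2 with hE_def
  have hE0 : 0 ≤ E := Finset.sum_nonneg fun a _ => sq_nonneg _
  have hEδ : E ≤ δ ^ 2 := by
    have := Real.sq_sqrt hE0
    nlinarith [Real.sqrt_nonneg E]
  -- rewrite the Hellinger sum as a double sum
  have hkey : ∑ z : Sym2 (Fin A), (Real.sqrt (hw l z) - Real.sqrt (hw u z)) ^ 2
      = ∑ a, ∑ b, (s a * s b - t a * t b) ^ 2 := by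
    apply sym2_sum_eq
    · intro a
      rw [hw_apply, hw_apply, if_pos rfl]
      have h1 : Real.sqrt ((2 - 1) * l a * l a) = t a * t a := by
        rw [show (2 - (1:ℝ)) * l a * l a = l a * l a by ring, Real.sqrt_mul_self (hl a)]
        rw [ht_def]
        exact (Real.mul_self_sqrt (hl a)).symm
      have h2 : Real.sqrt ((2 - 1) * u a * u a) = s a * s a := by
        rw [show (2 - (1:ℝ)) * u a * u a = u a * u a by ring, Real.sqrt_mul_self (hu a)]
        rw [hs_def]
        exact (Real.mul_self_sqrt (hu a)).symm
      rw [h1, h2]; ring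
    · intro a b hab
      rw [hw_apply, hw_apply, if_neg hab]
      have h1 : Real.sqrt ((2 - 0) * l a * l b) = Real.sqrt 2 * (t a * t b) := by
        rw [show (2 - (0:ℝ)) * l a * l b = 2 * (l a * l b) by ring,
          Real.sqrt_mul (by norm_num), Real.sqrt_mul (hl a)]
      have h2 : Real.sqrt ((2 - 0) * u a * u b) = Real.sqrt 2 * (s a * s b) := by
        rw [show (2 - (0:ℝ)) * u a * u b = 2 * (u a * u b) by ring,
          Real.sqrt_mul (by norm_num), Real.sqrt_mul (hu a)]
      rw [h1, h2]
      have h3 : (Real.sqrt 2) ^ 2 = 2 := Real.sq_sqrt (by norm_num)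
      calc (Real.sqrt 2 * (t a * t b) - Real.sqrt 2 * (s a * s b)) ^ 2
          = (Real.sqrt 2) ^ 2 * (s a * s b - t a * t b) ^ 2 := by ring
        _ = 2 * (s a * s b - t a * t b) ^ 2 := by rw [h3]
    · intro a b; ring
  -- bounds on the sums of squares
  have hT : ∑ a, (t a) ^ 2 ≤ 1 := by
    have : ∀ a, (t a) ^ 2 = l a := fun a => Real.sq_sqrt (hl a)
    calc ∑ a, (t a) ^ 2 = ∑ a, l a := Finset.sum_congr rfl fun a _ => this a
      _ ≤ ∑ a, α a := Finset.sum_le_sum fun a _ => hlα a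
      _ = 1 := hα1
  have hCS : ∑ a, Real.sqrt (α a) * (s a - t a) ≤ δ := by
    have h1 := Finset.sum_mul_sq_le_sq_mul_sq Finset.univ
      (fun a => Real.sqrt (α a)) (fun a => s a - t a)
    have h2 : ∑ a, (Real.sqrt (α a)) ^ 2 = 1 := by
      rw [← hα1]; exact Finset.sum_congr rfl fun a _ => Real.sq_sqrt (hα0' a)
    have h3 : (0:ℝ) ≤ ∑ a, Real.sqrt (α a) * (s a - t a) :=
      Finset.sum_nonneg fun a _ => mul_nonneg (Real.sqrt_nonneg _) (by linarith [hts a])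
    rw [h2, one_mul] at h1
    nlinarith
  have hS : ∑ a, (s a) ^ 2 ≤ (1 + δ) ^ 2 := by
    have hpt : ∀ a, (s a) ^ 2 ≤ (Real.sqrt (α a) + (s a - t a)) ^ 2 := by
      intro a
      have h1 : t a ≤ Real.sqrt (α a) := Real.sqrt_le_sqrt (hlα a)
      have h2 : s a ≤ Real.sqrt (α a) + (s a - t a) := by linarith
      exact pow_le_pow_left₀ (hs0 a) h2 2
    calc ∑ a, (s a) ^ 2 ≤ ∑ a, (Real.sqrt (α a) + (s a - t a)) ^ 2 :=
          Finset.sum_le_sum fun a _ => hpt a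
      _ = ∑ a, (α a + 2 * (Real.sqrt (α a) * (s a - t a)) + (s a - t a) ^ 2) := by
          refine Finset.sum_congr rfl fun a _ => ?_
          rw [add_sq, Real.sq_sqrt (hα0' a)]
          ring
      _ = ∑ a, α a + 2 * ∑ a, Real.sqrt (α a) * (s a - t a) + E := by
          rw [hE_def, Finset.sum_add_distrib, Finset.sum_add_distrib, ← Finset.mul_sum]
      _ ≤ 1 + 2 * δ + δ ^ 2 := by rw [hα1]; nlinarith
      _ = (1 + δ) ^ 2 := by ring
  -- the pointwise bound and summation
  have hsum : ∑ a, ∑ b, (s a * s b - t a * t b) ^ 2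
      ≤ 2 * (∑ a, (s a) ^ 2) * E + 2 * (∑ a, (t a) ^ 2) * E := by
    have hpt : ∀ a b : Fin A, (s a * s b - t a * t b) ^ 2
        ≤ 2 * (s a) ^ 2 * (s b - t b) ^ 2 + 2 * (t b) ^ 2 * (s a - t a) ^ 2 := by
      intro a b
      nlinarith [sq_nonneg (s a * (s b - t b) - t b * (s a - t a))]
    calc ∑ a, ∑ b, (s a * s b - t a * t b) ^ 2
        ≤ ∑ a, ∑ b, (2 * (s a) ^ 2 * (s b - t b) ^ 2 + 2 * (t b) ^ 2 * (s a - t a) ^ 2) :=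
          Finset.sum_le_sum fun a _ => Finset.sum_le_sum fun b _ => hpt a b
      _ = 2 * (∑ a, (s a) ^ 2) * E + 2 * (∑ a, (t a) ^ 2) * E := by
          rw [hE_def]
          simp only [Finset.sum_add_distrib, ← Finset.mul_sum, ← Finset.sum_mul]
          try ring
  -- conclusion
  have hfinal : ∑ z : Sym2 (Fin A), (Real.sqrt (hw l z) - Real.sqrt (hw u z)) ^ 2
      ≤ (Real.sqrt 2 * δ * (2 + δ)) ^ 2 := by
    have h2 : (Real.sqrt 2) ^ 2 = 2 := Real.sq_sqrt (by norm_num)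
    rw [hkey]
    have hST : 2 * (∑ a, (s a) ^ 2) * E + 2 * (∑ a, (t a) ^ 2) * E
        ≤ 2 * ((1 + δ) ^ 2 + 1) * δ ^ 2 := by nlinarith
    calc ∑ a, ∑ b, (s a * s b - t a * t b) ^ 2
        ≤ 2 * ((1 + δ) ^ 2 + 1) * δ ^ 2 := hsum.trans hST
      _ ≤ 2 * δ ^ 2 * (2 + δ) ^ 2 := by
          nlinarith [sq_nonneg δ, mul_nonneg (mul_nonneg hδ.le hδ.le) hδ.le]
      _ = (Real.sqrt 2 * δ * (2 + δ)) ^ 2 := by rw [mul_pow, mul_pow, h2]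
  have hpos : 0 ≤ Real.sqrt 2 * δ * (2 + δ) := by positivity
  calc hellF (hw l) (hw u)
      = Real.sqrt (∑ z : Sym2 (Fin A), (Real.sqrt (hw l z) - Real.sqrt (hw u z)) ^ 2) := rfl
    _ ≤ Real.sqrt ((Real.sqrt 2 * δ * (2 + δ)) ^ 2) := Real.sqrt_le_sqrt hfinal
    _ = Real.sqrt 2 * δ * (2 + δ) := Real.sqrt_sq hpos


/-- **Lemma 5: bracketing entropy of Hardy-Weinberg genotype distributions.** -/
theorem bracket_hardy_weinberg (A : ℕ) (hA : 2 ≤ A) (δ : ℝ) (hδ : 0 < δ) :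
    (∀ l u α : Fin A → ℝ,
      (∀ a, 0 ≤ l a) → (∀ a, 0 ≤ u a) → α ∈ stdSimplex ℝ (Fin A) →
      (∀ a, l a ≤ α a) → (∀ a, α a ≤ u a) →
      Real.sqrt (∑ a, (Real.sqrt (u a) - Real.sqrt (l a)) ^ 2) ≤ δ →
      (∀ x, hw l x ≤ hw α x ∧ hw α x ≤ hw u x) ∧
        hellF (hw l) (hw u) ≤ Real.sqrt 2 * δ * (2 + δ))
    ∧
    ∀ (N : ℕ) (lo up : Fin N → Fin A → ℝ),
      (∀ j, hellF (lo j) (up j) ≤ δ) →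
      (∀ p ∈ stdSimplex ℝ (Fin A), ∃ j, ∀ a, lo j a ≤ p a ∧ p a ≤ up j a) →
      ∃ (N' : ℕ) (_ : N' ≤ N) (lo2 up2 : Fin N' → Sym2 (Fin A) → ℝ),
        (∀ j, hellF (lo2 j) (up2 j) ≤ Real.sqrt 2 * δ * (2 + δ)) ∧
        ∀ α ∈ stdSimplex ℝ (Fin A), ∃ j, ∀ x, lo2 j x ≤ hw α x ∧ hw α x ≤ up2 j x := by
  have hmain : ∀ l u α : Fin A → ℝ,
      (∀ a, 0 ≤ l a) → (∀ a, 0 ≤ u a) → α ∈ stdSimplex ℝ (Fin A) →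
      (∀ a, l a ≤ α a) → (∀ a, α a ≤ u a) →
      Real.sqrt (∑ a, (Real.sqrt (u a) - Real.sqrt (l a)) ^ 2) ≤ δ →
      (∀ x, hw l x ≤ hw α x ∧ hw α x ≤ hw u x) ∧
        hellF (hw l) (hw u) ≤ Real.sqrt 2 * δ * (2 + δ) := by
    intro l u α hl hu hα hlα hαu hδ'
    have h' : Real.sqrt (∑ a, (Real.sqrt (u a) - Real.sqrt (l a)) ^ 2) ≤ δ := hδ'
    exact main1 δ hδ l u α hl hu hα hlα hαu h'
  refine ⟨hmain, ?_⟩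
  intro N lo up hdiam hcover
  classical
  -- truncated brackets
  set lo' : Fin N → Fin A → ℝ := fun j a => max (lo j a) 0 with hlo'
  set up' : Fin N → Fin A → ℝ := fun j a => max (up j a) 0 with hup'
  have hsqrt_max : ∀ x : ℝ, Real.sqrt (max x 0) = Real.sqrt x := by
    intro x
    rcases le_total 0 x with h | h
    · rw [max_eq_left h]
    · rw [max_eq_right h]
      exact Real.sqrt_zero.trans (Real.sqrt_eq_zero'.mpr h).symm
  refine ⟨N, le_refl N,
    fun j => if h : ∃ α ∈ stdSimplex ℝ (Fin A), ∀ a, lo j a ≤ α a ∧ α a ≤ up j a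
      then hw (lo' j) else fun _ => 0,
    fun j => if h : ∃ α ∈ stdSimplex ℝ (Fin A), ∀ a, lo j a ≤ α a ∧ α a ≤ up j a
      then hw (up' j) else fun _ => 0, ?_, ?_⟩
  · intro j
    by_cases h : ∃ α ∈ stdSimplex ℝ (Fin A), ∀ a, lo j a ≤ α a ∧ α a ≤ up j a
    · simp only [dif_pos h]
      obtain ⟨α, hα, hbr⟩ := h
      refine (hmain (lo' j) (up' j) α (fun a => le_max_right _ _) (fun a => le_max_right _ _)
        hα (fun a => max_le (hbr a).1 (hα.1 a)) (fun a => (hbr a).2.trans (le_max_left _ _))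
        ?_).2
      -- the sqrt-sum condition follows from the Hellinger diameter of the original bracket
      have heq : ∑ a, (Real.sqrt (up' j a) - Real.sqrt (lo' j a)) ^ 2
          = ∑ a, (Real.sqrt (lo j a) - Real.sqrt (up j a)) ^ 2 := by
        refine Finset.sum_congr rfl fun a _ => ?_
        rw [hlo', hup']
        simp only [hsqrt_max]
        ring
      rw [heq]
      exact hdiam j
    · simp only [dif_neg h]
      have : hellF (fun _ : Sym2 (Fin A) => (0:ℝ)) (fun _ => 0) = 0 := by
        simp [hellF]
      rw [this]
      positivity
  · intro α hα
    obtain ⟨j, hj⟩ := hcover α hα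
    have h : ∃ β ∈ stdSimplex ℝ (Fin A), ∀ a, lo j a ≤ β a ∧ β a ≤ up j a := ⟨α, hα, hj⟩
    refine ⟨j, ?_⟩
    simp only [dif_pos h]
    exact (hmain (lo' j) (up' j) α (fun a => le_max_right _ _) (fun a => le_max_right _ _)
      hα (fun a => max_le (hj a).1 (hα.1 a)) (fun a => (hj a).2.trans (le_max_left _ _))
      (by
        have heq : ∑ a, (Real.sqrt (up' j a) - Real.sqrt (lo' j a)) ^ 2
            = ∑ a, (Real.sqrt (lo j a) - Real.sqrt (up j a)) ^ 2 := by
          refine Finset.sum_congr rfl fun a _ => ?_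
          rw [hlo', hup']
          simp only [hsqrt_max]
          ring
        rw [heq]
        exact hdiam j)).1


end
end

section
/- Let η : [0,∞) → [0,∞) be convex and nondecreasing with η(0) = 0, and let δ > 0. Then ∑_{j=1}^∞ √j · ( η(2^{1−j}·δ) − η(2^{−j}·δ) ) ≤ 2·η(δ). -/
open Real ENNReal

noncomputable section

/-- The dyadic summation bound used in the proof of Proposition 2:
for `η` convex nondecreasing on `[0,∞)` with `η(0) = 0` and `δ > 0`,
`∑_{j≥1} √j (η(2^{1-j} δ) - η(2^{-j} δ)) ≤ 2 η(δ)`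
(the sum, with nonnegative terms, is taken in `ℝ≥0∞`). -/
theorem dyadic_sum_bound (η : ℝ → ℝ)
    (hconv : ConvexOn ℝ (Set.Ici 0) η)
    (hmono : MonotoneOn η (Set.Ici 0))
    (hnn : ∀ x ≥ (0 : ℝ), 0 ≤ η x)
    (h0 : η 0 = 0) (δ : ℝ) (hδ : 0 < δ) :
    ∑' j : ℕ, ENNReal.ofReal
        (Real.sqrt ((j : ℝ) + 1) *
          (η ((2 : ℝ) ^ (-(j : ℝ)) * δ) - η ((2 : ℝ) ^ (-(j : ℝ) - 1) * δ)))
      ≤ ENNReal.ofReal (2 * η δ) := by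
  set a : ℕ → ℝ := fun j => η ((2 : ℝ) ^ (-(j : ℝ)) * δ) with ha
  have ht : ∀ j : ℕ, (0:ℝ) < (2:ℝ) ^ (-(j:ℝ)) := fun j =>
    Real.rpow_pos_of_pos two_pos _
  have ht1 : ∀ j : ℕ, (2:ℝ) ^ (-(j:ℝ)) ≤ 1 := fun j =>
    Real.rpow_le_one_of_one_le_of_nonpos one_le_two (neg_nonpos.mpr (Nat.cast_nonneg j))
  have hηδ : 0 ≤ η δ := hnn δ hδ.le
  have hann : ∀ j : ℕ, 0 ≤ a j := fun j =>
    hnn _ (le_of_lt (mul_pos (ht j) hδ))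
  have hale : ∀ j : ℕ, a j ≤ (2:ℝ) ^ (-(j:ℝ)) * η δ := by
    intro j
    have := hconv.2 (Set.mem_Ici.mpr hδ.le) (Set.mem_Ici.mpr le_rfl)
      (le_of_lt (ht j)) (by linarith [ht1 j] : (0:ℝ) ≤ 1 - (2:ℝ) ^ (-(j:ℝ))) (by ring)
    simpa [smul_eq_mul, h0, ha] using this
  have hexp : ∀ j : ℕ, (2:ℝ) ^ (-(j:ℝ) - 1) = (2:ℝ) ^ (-((j+1:ℕ):ℝ)) := by
    intro j; congr 1; push_cast; ring
  have hamono : ∀ j : ℕ, a (j+1) ≤ a j := by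
    intro j
    refine hmono (Set.mem_Ici.mpr (le_of_lt (mul_pos (ht (j+1)) hδ)))
      (Set.mem_Ici.mpr (le_of_lt (mul_pos (ht j) hδ))) ?_
    refine mul_le_mul_of_nonneg_right ?_ hδ.le
    exact Real.rpow_le_rpow_of_exponent_le one_le_two (by push_cast; linarith)
  have hs : ∀ j : ℕ, Real.sqrt ((j:ℝ)+1) - Real.sqrt j ≤ 1 := by
    intro j
    have h1 : (j:ℝ)+1 ≤ (Real.sqrt j + 1)^2 := by
      have h2 := Real.sq_sqrt (Nat.cast_nonneg j : (0:ℝ) ≤ j)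
      nlinarith [Real.sqrt_nonneg (j:ℝ)]
    have := Real.sqrt_le_sqrt h1
    rw [Real.sqrt_sq (by positivity)] at this
    linarith
  have hsmono : ∀ j : ℕ, Real.sqrt j ≤ Real.sqrt ((j:ℝ)+1) := fun j =>
    Real.sqrt_le_sqrt (by linarith)
  have hhalf : ∀ N : ℕ, (2:ℝ) ^ (-((N+1:ℕ):ℝ)) = (2:ℝ) ^ (-(N:ℝ)) / 2 := by
    intro N
    rw [show -((N+1:ℕ):ℝ) = -(N:ℝ) - 1 by push_cast; ring, Real.rpow_sub two_pos,
      Real.rpow_one]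
  have key : ∀ N : ℕ,
      (∑ j ∈ Finset.range N, Real.sqrt ((j:ℝ)+1) * (a j - a (j+1)))
        + Real.sqrt N * a N ≤ (2 - 2 * (2:ℝ)^(-(N:ℝ))) * η δ := by
    intro N
    induction N with
    | zero => simp
    | succ N ih =>
      rw [Finset.sum_range_succ]
      have h1 : (Real.sqrt ((N:ℝ)+1) - Real.sqrt N) * a N ≤ a N :=
        mul_le_of_le_one_left (hann N) (hs N)
      have h2 := hale N
      have h3 := hhalf N
      have h4 := hsmono N
      have hc : Real.sqrt ((N+1:ℕ):ℝ) = Real.sqrt ((N:ℝ)+1) := by push_cast; ring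
      rw [h3, hc]
      nlinarith [ht N, hann (N+1)]
  apply ENNReal.tsum_le_of_sum_range_le
  intro N
  have hterm : ∀ j : ℕ, ENNReal.ofReal
        (Real.sqrt ((j : ℝ) + 1) *
          (η ((2 : ℝ) ^ (-(j : ℝ)) * δ) - η ((2 : ℝ) ^ (-(j : ℝ) - 1) * δ)))
      = ENNReal.ofReal (Real.sqrt ((j:ℝ)+1) * (a j - a (j+1))) := by
    intro j; rw [ha]; rw [hexp j]
  simp_rw [hterm]
  have hnnterm : ∀ j ∈ Finset.range N, 0 ≤ Real.sqrt ((j:ℝ)+1) * (a j - a (j+1)) := by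
    intro j _
    exact mul_nonneg (Real.sqrt_nonneg _) (by linarith [hamono j])
  rw [← ENNReal.ofReal_sum_of_nonneg hnnterm]
  refine ENNReal.ofReal_le_ofReal ?_
  have := key N
  nlinarith [mul_nonneg (Real.sqrt_nonneg (N:ℝ)) (hann N), mul_nonneg (ht N).le hηδ]

end
end

section
/- Let η : [0,∞) → [0,∞) be convex, differentiable and strictly increasing with η(0) = 0, and let b > 1. Then the function f(x) = x·√(b − ln η^{-1}(x)) is nondecreasing on the interval (0, η(1)], where η^{-1} denotes the inverse function of η (note that η^{-1}(x) ≤ 1 for x ≤ η(1), so b − ln η^{-1}(x) ≥ b > 0 on this interval). -/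
open Real

noncomputable section

lemma aux_t_sqrt_mono (b : ℝ) (hb : 1 < b) :
    MonotoneOn (fun t => t * Real.sqrt (b - Real.log t)) (Set.Ioc (0:ℝ) 1) := by
  have hderiv : ∀ t ∈ interior (Set.Ioc (0:ℝ) 1),
      HasDerivAt (fun t => t * Real.sqrt (b - Real.log t))
        (1 * Real.sqrt (b - Real.log t) +
          t * ((0 - t⁻¹) / (2 * Real.sqrt (b - Real.log t)))) t := by
    intro t ht
    rw [interior_Ioc] at ht
    have hpos : 0 < b - Real.log t := by
      have : Real.log t < 0 := Real.log_neg ht.1 ht.2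
      linarith
    have hlog : HasDerivAt Real.log t⁻¹ t := Real.hasDerivAt_log (ne_of_gt ht.1)
    have h1 : HasDerivAt (fun t => b - Real.log t) (0 - t⁻¹) t :=
      (hasDerivAt_const t b).sub hlog
    have hsqrt := h1.sqrt hpos.ne'
    exact (hasDerivAt_id t).mul hsqrt
  apply monotoneOn_of_deriv_nonneg (convex_Ioc 0 1)
  · apply ContinuousOn.mul continuousOn_id
    apply Real.continuous_sqrt.comp_continuousOn
    apply continuousOn_const.sub
    exact Real.continuousOn_log.mono (fun t ht => ne_of_gt ht.1)
  · intro t ht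
    exact (hderiv t ht).differentiableAt.differentiableWithinAt
  · intro t ht
    rw [(hderiv t ht).deriv]
    rw [interior_Ioc] at ht
    have hpos : 0 < b - Real.log t := by
      have : Real.log t < 0 := Real.log_neg ht.1 ht.2
      linarith
    have hhalf : (1:ℝ)/2 < b - Real.log t := by
      have : Real.log t < 0 := Real.log_neg ht.1 ht.2
      linarith
    set s := Real.sqrt (b - Real.log t) with hs
    have hs0 : 0 < s := Real.sqrt_pos.mpr hpos
    have hs2 : s ^ 2 = b - Real.log t := Real.sq_sqrt hpos.le
    have htne : t ≠ 0 := ne_of_gt ht.1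
    have : 1 * s + t * ((0 - t⁻¹) / (2 * s)) = s - 1 / (2 * s) := by
      field_simp
      ring
    rw [this]
    rw [sub_nonneg, div_le_iff₀ (by positivity)]
    nlinarith

/-- The monotonicity statement used in the proof of Proposition 3:
if `η` is convex, differentiable and strictly increasing on `[0,∞)` with
`η(0) = 0`, `g` is the inverse of `η` (on the relevant intervals), and `b > 1`,
then `x ↦ x √(b - ln η⁻¹(x))` is nondecreasing on `(0, η(1)]`. -/
theorem monotone_x_sqrt_inv (η g : ℝ → ℝ)
    (hconv : ConvexOn ℝ (Set.Ici 0) η)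
    (hdiff : DifferentiableOn ℝ η (Set.Ici 0))
    (hmono : StrictMonoOn η (Set.Ici 0))
    (h0 : η 0 = 0)
    (hg1 : ∀ x ∈ Set.Icc (0 : ℝ) 1, g (η x) = x)
    (hg2 : ∀ y ∈ Set.Icc 0 (η 1), g y ∈ Set.Icc (0 : ℝ) 1 ∧ η (g y) = y)
    (b : ℝ) (hb : 1 < b) :
    MonotoneOn (fun x => x * Real.sqrt (b - Real.log (g x))) (Set.Ioc 0 (η 1)) := by
  intro x₁ hx₁ x₂ hx₂ hle
  obtain ⟨ht₁m, hηt₁⟩ := hg2 x₁ ⟨hx₁.1.le, hx₁.2⟩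
  obtain ⟨ht₂m, hηt₂⟩ := hg2 x₂ ⟨hx₂.1.le, hx₂.2⟩
  set t₁ := g x₁
  set t₂ := g x₂
  have ht₁pos : 0 < t₁ := by
    rcases lt_or_eq_of_le ht₁m.1 with h | h
    · exact h
    · exfalso; rw [← h, h0] at hηt₁; exact hx₁.1.ne hηt₁
  have ht₂pos : 0 < t₂ := by
    rcases lt_or_eq_of_le ht₂m.1 with h | h
    · exact h
    · exfalso; rw [← h, h0] at hηt₂; exact hx₂.1.ne hηt₂
  have ht₁₂ : t₁ ≤ t₂ := by
    have := (hmono.le_iff_le (Set.mem_Ici.mpr ht₁m.1) (Set.mem_Ici.mpr ht₂m.1)).mp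
    apply this
    rw [hηt₁, hηt₂]; exact hle
  have hηt₂pos : 0 < η t₂ := by
    have := hmono (Set.mem_Ici.mpr le_rfl) (Set.mem_Ici.mpr ht₂m.1) ht₂pos
    rwa [h0] at this
  -- convexity: η t₁ ≤ (t₁/t₂) * η t₂
  have hconv' : η t₁ ≤ (t₁ / t₂) * η t₂ := by
    have ha : (0:ℝ) ≤ 1 - t₁ / t₂ := by
      rw [sub_nonneg]
      exact div_le_one_of_le₀ ht₁₂ ht₂pos.le
    have hbnn : (0:ℝ) ≤ t₁ / t₂ := by positivity
    have := hconv.2 (Set.mem_Ici.mpr le_rfl) (Set.mem_Ici.mpr ht₂m.1) ha hbnn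
      (by ring : (1 - t₁ / t₂) + t₁ / t₂ = 1)
    simp only [smul_eq_mul, mul_zero, zero_add] at this
    rw [div_mul_cancel₀ _ ht₂pos.ne', h0] at this
    linarith
  have haux := aux_t_sqrt_mono b hb ⟨ht₁pos, ht₁m.2⟩ ⟨ht₂pos, ht₂m.2⟩ ht₁₂
  simp only at haux
  have hs₁ : (0:ℝ) ≤ Real.sqrt (b - Real.log t₁) := Real.sqrt_nonneg _
  calc x₁ * Real.sqrt (b - Real.log t₁)
      = η t₁ * Real.sqrt (b - Real.log t₁) := by rw [hηt₁]
    _ ≤ (t₁ / t₂ * η t₂) * Real.sqrt (b - Real.log t₁) :=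
        mul_le_mul_of_nonneg_right hconv' hs₁
    _ = (η t₂ / t₂) * (t₁ * Real.sqrt (b - Real.log t₁)) := by ring
    _ ≤ (η t₂ / t₂) * (t₂ * Real.sqrt (b - Real.log t₂)) :=
        mul_le_mul_of_nonneg_left haux (by positivity)
    _ = η t₂ * Real.sqrt (b - Real.log t₂) := by
        field_simp
    _ = x₂ * Real.sqrt (b - Real.log t₂) := by rw [hηt₂]

end
end

section
/- Let L ≥ 1 and A_l ≥ 2 for all 1 ≤ l ≤ L. Then ∑_{(K,S) ∈ 𝕄} 2^{−D_{(K,S)}} ≤ (3/4)^L, where the (convergent) sum runs over (K,S) = (1,∅) together with all pairs (K,S) with K ≥ 2 an integer and S a nonempty subset of {1,…,L}. -/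
open Real BigOperators ENNReal

noncomputable section

/-- The collection 𝕄 of model indices `(K, S)`. -/
def Mset (L : ℕ) : Set (ℕ × Finset (Fin L)) :=
  {p | (p.1 = 1 ∧ p.2 = ∅) ∨ (2 ≤ p.1 ∧ p.2.Nonempty)}

/-- Dimension `D_{(K,S)}` of the model `M_{(K,S)}`. -/
def Dks {L : ℕ} (A : Fin L → ℕ) (K : ℕ) (S : Finset (Fin L)) : ℕ :=
  (K - 1) + K * ∑ l ∈ S, (A l - 1) + ∑ l ∈ Sᶜ, (A l - 1)

/-- The tail geometric sum `∑_{K ≥ 2} 2^{-(K-1)} = 1`. -/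
lemma geo_tail : ∑' K : ℕ, (if 2 ≤ K then ((2:ℝ≥0∞))⁻¹ ^ (K - 1) else 0) = 1 := by
  have hinj : Function.Injective (fun j : ℕ => j + 2) := fun a b h => by simpa using h
  have hsupp : Function.support
      (fun K : ℕ => (if 2 ≤ K then ((2:ℝ≥0∞))⁻¹ ^ (K - 1) else 0))
      ⊆ Set.range (fun j : ℕ => j + 2) := by
    intro K hK
    by_cases h2 : 2 ≤ K
    · exact ⟨K - 2, show K - 2 + 2 = K by omega⟩
    · simp [Function.mem_support, if_neg h2] at hK
  have := hinj.tsum_eq hsupp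
  rw [← this]
  have h1 : ∀ j : ℕ, (if 2 ≤ j + 2 then ((2:ℝ≥0∞))⁻¹ ^ (j + 2 - 1) else 0)
      = 2⁻¹ * (2⁻¹) ^ j := by
    intro j
    rw [if_pos (by omega)]
    rw [show j + 2 - 1 = j + 1 by omega, pow_succ, mul_comm]
  calc ∑' j : ℕ, (if 2 ≤ j + 2 then ((2:ℝ≥0∞))⁻¹ ^ (j + 2 - 1) else 0)
      = ∑' j : ℕ, 2⁻¹ * ((2:ℝ≥0∞))⁻¹ ^ j := by simp only [h1]
    _ = 2⁻¹ * ∑' j : ℕ, ((2:ℝ≥0∞))⁻¹ ^ j := ENNReal.tsum_mul_left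
    _ = 2⁻¹ * 2 := by rw [ENNReal.tsum_geometric, ENNReal.one_sub_inv_two, inv_inv]
    _ = 1 := ENNReal.inv_mul_cancel (by norm_num) (by norm_num)

/-- Binomial identity: `∑_S x^{|S|} = (x+1)^L`. -/
lemma sum_card_pow (L : ℕ) (x : ℝ≥0∞) :
    ∑ S : Finset (Fin L), x ^ S.card = (x + 1) ^ L := by
  have h := Finset.prod_add (fun _ : Fin L => x) (fun _ : Fin L => 1) Finset.univ
  simp only [Finset.prod_const, one_pow, mul_one,
    Finset.powerset_univ, Finset.card_univ, Fintype.card_fin] at h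
  rw [← h]

/-- Lower bound on the dimension. -/
lemma Dks_ge {L : ℕ} (A : Fin L → ℕ) (hA : ∀ l, 2 ≤ A l) {K : ℕ} (hK : 1 ≤ K)
    (S : Finset (Fin L)) : (K - 1) * (S.card + 1) + L ≤ Dks A K S := by
  have h1 : S.card ≤ ∑ l ∈ S, (A l - 1) := by
    calc S.card = ∑ _l ∈ S, 1 := by simp
    _ ≤ ∑ l ∈ S, (A l - 1) := Finset.sum_le_sum fun l _ => by have := hA l; omega
  have hsL : S.card ≤ L := by
    have := S.card_le_univ
    simpa using this
  have h2 : L - S.card ≤ ∑ l ∈ Sᶜ, (A l - 1) := by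
    calc L - S.card = Sᶜ.card := by
          rw [Finset.card_compl]; simp
    _ = ∑ _l ∈ Sᶜ, 1 := by simp
    _ ≤ ∑ l ∈ Sᶜ, (A l - 1) := Finset.sum_le_sum fun l _ => by have := hA l; omega
  obtain ⟨j, rfl⟩ : ∃ j, K = j + 1 := ⟨K - 1, by omega⟩
  have h3 : (j + 1) * S.card ≤ (j + 1) * ∑ l ∈ S, (A l - 1) :=
    Nat.mul_le_mul_left _ h1
  have heq : j * (S.card + 1) + S.card = (j + 1) * S.card + j := by ring
  unfold Dks
  simp only [Nat.add_sub_cancel]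
  generalize hu : j * (S.card + 1) = u at heq ⊢
  generalize hw : (j + 1) * (∑ l ∈ S, (A l - 1)) = w at h3 ⊢
  generalize hv : (j + 1) * S.card = v at h3 heq
  omega

/-- Pointwise bound on the tsum term for `m ∈ 𝕄`. -/
lemma pointwise_bound {L : ℕ} (A : Fin L → ℕ) (hA : ∀ l, 2 ≤ A l)
    {p : ℕ × Finset (Fin L)} (hp : p ∈ Mset L) :
    ((2:ℝ≥0∞))⁻¹ ^ (Dks A p.1 p.2)
      ≤ ((2:ℝ≥0∞))⁻¹ ^ ((p.1 - 1) * (p.2.card + 1) + L) := by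
  apply pow_le_pow_right_of_le_one' (ENNReal.inv_le_one.mpr one_le_two)
  apply Dks_ge A hA _ p.2
  rcases hp with ⟨h1, _⟩ | ⟨h2, _⟩
  · omega
  · omega

/-- The inner sum over `K` for a fixed `S`. -/
lemma inner_sum_le {L : ℕ} (S : Finset (Fin L)) :
    ∑' K : ℕ, (Mset L).indicator
        (fun p : ℕ × Finset (Fin L) => ((2:ℝ≥0∞))⁻¹ ^ ((p.1 - 1) * (p.2.card + 1) + L))
        (K, S)
      ≤ ((2:ℝ≥0∞))⁻¹ ^ L * ((2:ℝ≥0∞))⁻¹ ^ S.card := by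
  rcases S.eq_empty_or_nonempty with rfl | hS
  · rw [tsum_eq_single 1 ?_]
    · have hmem : ((1 : ℕ), (∅ : Finset (Fin L))) ∈ Mset L := Or.inl ⟨rfl, rfl⟩
      rw [Set.indicator_of_mem hmem]
      simp
    · intro K hK
      apply Set.indicator_of_notMem
      intro h
      rcases h with ⟨h1, _⟩ | ⟨_, h2⟩
      · exact hK h1
      · exact absurd rfl h2.ne_empty
  · have hbd : ∀ K : ℕ, (Mset L).indicator
        (fun p : ℕ × Finset (Fin L) => ((2:ℝ≥0∞))⁻¹ ^ ((p.1 - 1) * (p.2.card + 1) + L))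
        (K, S) ≤ ((2:ℝ≥0∞))⁻¹ ^ (L + S.card) *
          (if 2 ≤ K then ((2:ℝ≥0∞))⁻¹ ^ (K - 1) else 0) := by
      intro K
      by_cases hmem : ((K, S) : ℕ × Finset (Fin L)) ∈ Mset L
      · have hK2 : 2 ≤ K := by
          rcases hmem with ⟨_, h⟩ | ⟨h, _⟩
          · exact absurd h hS.ne_empty
          · exact h
        rw [Set.indicator_of_mem hmem, if_pos hK2, ← pow_add]
        apply pow_le_pow_right_of_le_one' (ENNReal.inv_le_one.mpr one_le_two)
        obtain ⟨j, rfl⟩ : ∃ j, K = j + 2 := ⟨K - 2, by omega⟩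
        have hcard : 1 ≤ S.card := Finset.card_pos.mpr hS
        have : S.card ≤ (j + 1) * S.card := Nat.le_mul_of_pos_left _ (by omega)
        have heq : (j + 2 - 1) * (S.card + 1) = (j + 1) * S.card + (j + 1) := by
          rw [show j + 2 - 1 = j + 1 by omega, Nat.mul_add, Nat.mul_one]
        rw [heq]
        omega
      · rw [Set.indicator_of_notMem hmem]
        exact zero_le
    calc ∑' K : ℕ, (Mset L).indicator
          (fun p : ℕ × Finset (Fin L) => ((2:ℝ≥0∞))⁻¹ ^ ((p.1 - 1) * (p.2.card + 1) + L))
          (K, S)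
        ≤ ∑' K : ℕ, ((2:ℝ≥0∞))⁻¹ ^ (L + S.card) *
            (if 2 ≤ K then ((2:ℝ≥0∞))⁻¹ ^ (K - 1) else 0) := ENNReal.tsum_le_tsum hbd
      _ = ((2:ℝ≥0∞))⁻¹ ^ (L + S.card) *
            ∑' K : ℕ, (if 2 ≤ K then ((2:ℝ≥0∞))⁻¹ ^ (K - 1) else 0) :=
        ENNReal.tsum_mul_left
      _ = ((2:ℝ≥0∞))⁻¹ ^ L * ((2:ℝ≥0∞))⁻¹ ^ S.card := by
        rw [geo_tail, mul_one, pow_add]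

/-- **Lemma 8: the weights are summable.**
`∑_{(K,S) ∈ 𝕄} 2^{-D_{(K,S)}} ≤ (3/4)^L` (sum taken in `ℝ≥0∞`). -/
theorem sum_weights_le (L : ℕ) (hL : 1 ≤ L) (A : Fin L → ℕ) (hA : ∀ l, 2 ≤ A l) :
    ∑' m : {p : ℕ × Finset (Fin L) // p ∈ Mset L},
        ((2 : ℝ≥0∞))⁻¹ ^ (Dks A m.val.1 m.val.2)
      ≤ ((3 : ℝ≥0∞) / 4) ^ L := by
  set g : ℕ × Finset (Fin L) → ℝ≥0∞ :=
    fun p => ((2:ℝ≥0∞))⁻¹ ^ ((p.1 - 1) * (p.2.card + 1) + L) with hg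
  calc ∑' m : {p : ℕ × Finset (Fin L) // p ∈ Mset L},
        ((2 : ℝ≥0∞))⁻¹ ^ (Dks A m.val.1 m.val.2)
      ≤ ∑' m : {p : ℕ × Finset (Fin L) // p ∈ Mset L}, g m.val :=
        ENNReal.tsum_le_tsum fun m => pointwise_bound A hA m.2
    _ = ∑' p : ℕ × Finset (Fin L), (Mset L).indicator g p := tsum_subtype (Mset L) g
    _ = ∑' S : Finset (Fin L), ∑' K : ℕ, (Mset L).indicator g (K, S) := by
        rw [ENNReal.tsum_prod', ENNReal.tsum_comm]
    _ = ∑ S : Finset (Fin L), ∑' K : ℕ, (Mset L).indicator g (K, S) := tsum_fintype _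
    _ ≤ ∑ S : Finset (Fin L), ((2:ℝ≥0∞))⁻¹ ^ L * ((2:ℝ≥0∞))⁻¹ ^ S.card :=
        Finset.sum_le_sum fun S _ => inner_sum_le S
    _ = ((2:ℝ≥0∞))⁻¹ ^ L * ∑ S : Finset (Fin L), ((2:ℝ≥0∞))⁻¹ ^ S.card := by
        rw [Finset.mul_sum]
    _ = ((2:ℝ≥0∞))⁻¹ ^ L * (2⁻¹ + 1) ^ L := by rw [sum_card_pow]
    _ = ((3 : ℝ≥0∞) / 4) ^ L := by
        rw [← mul_pow]
        congr 1
        rw [mul_add, mul_one, ← ENNReal.mul_inv (Or.inl two_ne_zero) (Or.inl ENNReal.ofNat_ne_top)]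
        rw [show (2:ℝ≥0∞) * 2 = 4 by norm_num]
        rw [ENNReal.eq_div_iff (by norm_num) (by norm_num), mul_add,
          ENNReal.mul_inv_cancel (by norm_num) (by norm_num),
          show (4:ℝ≥0∞) = 2*2 by norm_num, mul_assoc,
          ENNReal.mul_inv_cancel (by norm_num) (by norm_num)]
        norm_num

end
end
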